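/- Let K be a global field, 𝔭 a non-archimedean place of K with residue field k(𝔭) of characteristic p, and φ an endomorphism of P^1 of degree at least 2 defined over K with good reduction at 𝔭. Let P ∈ P^1(K) be a periodic point for φ with minimal period n, let m be the minimal period of the reduction P̃ of P modulo 𝔭 for the reduced map φ_𝔭, and let r be the multiplicative order of (φ^m)'(P) in k(𝔭) \ {0} (with r = ∞ if (φ^m)'(P) ≡ 0 mod 𝔭). Then one of the following holds: (i) n = m; (ii) n = mr; (iii) n = p^e m r for some integer e ≥ 1. -/

import Mathlib

/-!
Common definitions used to formalize the statements of
"Preperiodic points for rational functions defined over a global field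
in terms of good reduction" (arXiv:1403.2293).

* A (normalized, non-archimedean) place of a field `K` is modeled as a surjective
  discrete valuation `v : K → ℤ` (with the junk convention `v 0 = 0`).
* `P1 K` is the projective line over `K`; a point `[x : y]` is `P1.mk x y _`.
* An endomorphism of `P1` defined over `K` is a map `φ : P1 K → P1 K` admitting a
  lift by a pair of binary forms of a common degree `d`, given through their
  coefficient vectors, with nonvanishing resultant (the resultant is defined as
  the determinant of the Sylvester matrix).
* `φ` has good reduction at a place `pl` if it admits a lift whose coefficients
  are `pl`-integral and whose resultant is a `pl`-unit.
* `logDist` is the `𝔭`-adic logarithmic distance `δ_𝔭`; two points of `P1 K` have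
  the same reduction modulo `pl` if and only if `0 < logDist pl P Q`.
* The multiplier of a fixed point `[x:y]` of a map lifted by the forms `(a, b)` of
  degree `d` is computed by the trace formula
  `λ = (∂F/∂x (x,y) + ∂G/∂y (x,y) - d⬝c)/c`, where `c` is the scalar with
  `F(x,y) = c⬝x` and `G(x,y) = c⬝y`.
-/

namespace ArxivPreper

/-- A normalized non-archimedean place of `K`: a surjective discrete valuation
`v : K → ℤ`, with the junk convention `v 0 = 0`. -/
structure Place (K : Type*) [Field K] where
  v : K → ℤ
  v_zero : v 0 = 0
  v_mul : ∀ x y : K, x ≠ 0 → y ≠ 0 → v (x * y) = v x + v y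
  v_add : ∀ x y : K, x ≠ 0 → y ≠ 0 → x + y ≠ 0 → min (v x) (v y) ≤ v (x + y)
  v_surj : ∀ n : ℤ, ∃ x : K, x ≠ 0 ∧ v x = n

namespace Place

variable {K : Type*} [Field K] (pl : Place K)

lemma v_one : pl.v 1 = 0 := by
  have h := pl.v_mul 1 1 one_ne_zero one_ne_zero
  rw [one_mul] at h
  omega

lemma v_neg_one : pl.v (-1 : K) = 0 := by
  have h := pl.v_mul (-1 : K) (-1) (by norm_num) (by norm_num)
  rw [show ((-1 : K) * (-1)) = 1 by ring, pl.v_one] at h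
  omega

lemma v_neg (x : K) : pl.v (-x) = pl.v x := by
  by_cases h : x = 0
  · simp [h]
  · have h1 := pl.v_mul (-1) x (by norm_num) h
    rw [show (-1 : K) * x = -x by ring, pl.v_neg_one] at h1
    omega

lemma v_mul_nonneg {x y : K} (hx : 0 ≤ pl.v x) (hy : 0 ≤ pl.v y) : 0 ≤ pl.v (x * y) := by
  by_cases h1 : x = 0
  · simp [h1, pl.v_zero]
  by_cases h2 : y = 0
  · simp [h2, pl.v_zero]
  rw [pl.v_mul x y h1 h2]
  omega

lemma v_add_nonneg {x y : K} (hx : 0 ≤ pl.v x) (hy : 0 ≤ pl.v y) : 0 ≤ pl.v (x + y) := by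
  by_cases h1 : x = 0
  · simpa [h1] using hy
  by_cases h2 : y = 0
  · simpa [h2] using hx
  by_cases h3 : x + y = 0
  · rw [h3, pl.v_zero]
  exact le_trans (le_min hx hy) (pl.v_add x y h1 h2 h3)

lemma hred_add {a b : K} (ha : a = 0 ∨ 0 < pl.v a) (hb : b = 0 ∨ 0 < pl.v b) :
    a + b = 0 ∨ 0 < pl.v (a + b) := by
  rcases ha with ha | ha
  · subst ha; simpa using hb
  rcases hb with hb | hb
  · subst hb; simpa using Or.inr ha
  by_cases h3 : a + b = 0
  · exact Or.inl h3
  · right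
    have hA : a ≠ 0 := by
      intro h; rw [h, pl.v_zero] at ha; exact absurd ha (lt_irrefl 0)
    have hB : b ≠ 0 := by
      intro h; rw [h, pl.v_zero] at hb; exact absurd hb (lt_irrefl 0)
    exact lt_of_lt_of_le (lt_min ha hb) (pl.v_add a b hA hB h3)

lemma hred_mul {a b : K} (ha : 0 ≤ pl.v a) (hb : b = 0 ∨ 0 < pl.v b) :
    a * b = 0 ∨ 0 < pl.v (a * b) := by
  rcases hb with hb | hb
  · exact Or.inl (by rw [hb, mul_zero])
  by_cases h1 : a = 0
  · exact Or.inl (by rw [h1, zero_mul])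
  by_cases h2 : b = 0
  · exact Or.inl (by rw [h2, mul_zero])
  · right
    rw [pl.v_mul a b h1 h2]
    omega

end Place

/-- `K` is a global field: a number field, or a finite extension of `𝔽_p(t)`. -/
def IsGlobalField (K : Type*) [Field K] : Prop :=
  NumberField K ∨
    ∃ (p : ℕ) (hp : Fact p.Prime),
      letI := hp
      ∃ A : Algebra (RatFunc (ZMod p)) K,
        letI := A
        FiniteDimensional (RatFunc (ZMod p)) K

variable {K : Type*} [Field K]

/-- The projective line over `K`. -/
abbrev P1 (K : Type*) [Field K] := Projectivization K (Fin 2 → K)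

/-- The point `[x : y]` of the projective line. -/
def P1.mk (x y : K) (h : ¬(x = 0 ∧ y = 0)) : P1 K :=
  Projectivization.mk K ![x, y]
    (fun h0 => h ⟨by simpa using congrFun h0 0, by simpa using congrFun h0 1⟩)

/-- The point `[0 : 1]`. -/
def P1zero : P1 K := P1.mk 0 1 (fun h => one_ne_zero h.2)

/-- Value at `(x, y)` of the binary form of degree `d` with coefficient
vector `a` (the coefficient of `x^i y^(d-i)` is `a i`). -/
def formEval (d : ℕ) (a : Fin (d + 1) → K) (x y : K) : K :=
  ∑ i : Fin (d + 1), a i * x ^ (i : ℕ) * y ^ (d - (i : ℕ))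

/-- The Sylvester matrix of two binary forms of degree `d`, given by their
coefficient vectors. -/
def sylvester (d : ℕ) (a b : Fin (d + 1) → K) : Matrix (Fin (d + d)) (Fin (d + d)) K :=
  Matrix.of fun i j =>
    if hi : (i : ℕ) < d then
      if h : (i : ℕ) ≤ (j : ℕ) ∧ (j : ℕ) ≤ (i : ℕ) + d then a ⟨(j : ℕ) - (i : ℕ), by omega⟩
      else 0
    else
      if h : (i : ℕ) - d ≤ (j : ℕ) ∧ (j : ℕ) ≤ (i : ℕ) then
        b ⟨(j : ℕ) - ((i : ℕ) - d), by omega⟩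
      else 0

/-- The resultant of two binary forms of degree `d`: the determinant of their
Sylvester matrix. -/
def resultant (d : ℕ) (a b : Fin (d + 1) → K) : K := (sylvester d a b).det

/-- `(a, b)` is a pair of coefficient vectors of binary forms `F`, `G` of common degree `d`,
with nonzero resultant, such that `φ([x:y]) = [F(x,y) : G(x,y)]` on `P1 K`.  This witnesses
that `φ` is an endomorphism of the projective line defined over `K` (of degree `d`). -/
def IsLift (φ : P1 K → P1 K) (d : ℕ) (a b : Fin (d + 1) → K) : Prop :=
  resultant d a b ≠ 0 ∧
    ∀ (x y : K) (h : ¬(x = 0 ∧ y = 0)),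
      ∃ h' : ¬(formEval d a x y = 0 ∧ formEval d b x y = 0),
        φ (P1.mk x y h) = P1.mk (formEval d a x y) (formEval d b x y) h'

/-- `φ` is an endomorphism of `P1` defined over `K`. -/
def IsEndo (φ : P1 K → P1 K) : Prop := ∃ d a b, IsLift φ d a b

/-- `φ` has good reduction at the place `pl`: it can be written as `[F : G]` with `F`, `G`
binary forms of a common degree whose coefficients are `pl`-integral and whose resultant
is a `pl`-unit. -/
def GoodReduction (pl : Place K) (φ : P1 K → P1 K) : Prop :=
  ∃ (d : ℕ) (a b : Fin (d + 1) → K),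
    IsLift φ d a b ∧ (∀ i, 0 ≤ pl.v (a i)) ∧ (∀ i, 0 ≤ pl.v (b i)) ∧
      pl.v (resultant d a b) = 0

open Classical in
/-- The valuation of a place extended by `v 0 = ⊤`. -/
noncomputable def extv (pl : Place K) (x : K) : WithTop ℤ :=
  if x = 0 then ⊤ else (pl.v x : WithTop ℤ)

open Classical in
/-- `min (v x) (v y)` for a nonzero vector `(x, y)`, ignoring vanishing coordinates. -/
noncomputable def vminVec (pl : Place K) (w : Fin 2 → K) : ℤ :=
  if w 0 = 0 then pl.v (w 1)
  else if w 1 = 0 then pl.v (w 0)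
  else min (pl.v (w 0)) (pl.v (w 1))

/-- The `𝔭`-adic logarithmic distance
`δ_𝔭(P,Q) = v(x₁y₂ - x₂y₁) - min (v x₁) (v y₁) - min (v x₂) (v y₂)`
(computed on fixed representatives; it is independent of the choice of homogeneous
coordinates).  Note `δ_𝔭(P,Q) = ⊤` iff `P = Q`, and two points have the same reduction
modulo `pl` iff `0 < δ_𝔭(P,Q)`. -/
noncomputable def logDist (pl : Place K) (P Q : P1 K) : WithTop ℤ :=
  extv pl (P.rep 0 * Q.rep 1 - Q.rep 0 * P.rep 1) +
    ((-(vminVec pl P.rep) - vminVec pl Q.rep : ℤ) : WithTop ℤ)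

/-- The forward orbit `{φ^n(P) : n ∈ ℕ}` of `P` under `φ`. -/
def orbit (φ : P1 K → P1 K) (P : P1 K) : Set (P1 K) := Set.range fun n : ℕ => φ^[n] P

/-- `P` is preperiodic for `φ`: its forward orbit is finite. -/
def Preperiodic (φ : P1 K → P1 K) (P : P1 K) : Prop := (orbit φ P).Finite

/-- `P` is periodic for `φ`. -/
def PeriodicPt (φ : P1 K → P1 K) (P : P1 K) : Prop := ∃ n : ℕ, 0 < n ∧ φ^[n] P = P

/-- `x` is an `S`-unit of `K`. -/
def IsSUnit (S : Finset (Place K)) (x : K) : Prop :=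
  x ≠ 0 ∧ ∀ pl : Place K, pl ∉ S → pl.v x = 0

/-- The ring of `S`-integers of `K`. -/
def SIntegers (S : Finset (Place K)) : Subring K where
  carrier := {x : K | ∀ pl : Place K, pl ∉ S → 0 ≤ pl.v x}
  zero_mem' := fun pl _ => le_of_eq pl.v_zero.symm
  one_mem' := fun pl _ => le_of_eq pl.v_one.symm
  add_mem' := fun hx hy pl hpl => pl.v_add_nonneg (hx pl hpl) (hy pl hpl)
  mul_mem' := fun hx hy pl hpl => pl.v_mul_nonneg (hx pl hpl) (hy pl hpl)
  neg_mem' := fun {x} hx pl hpl => show 0 ≤ pl.v (-x) by rw [pl.v_neg]; exact hx pl hpl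

/-- The local ring `R_𝔭 = {x : v_𝔭(x) ≥ 0}` at the place `pl`. -/
def integersAt (pl : Place K) : Subring K where
  carrier := {x : K | 0 ≤ pl.v x}
  zero_mem' := le_of_eq pl.v_zero.symm
  one_mem' := le_of_eq pl.v_one.symm
  add_mem' := fun hx hy => pl.v_add_nonneg hx hy
  mul_mem' := fun hx hy => pl.v_mul_nonneg hx hy
  neg_mem' := fun {x} hx => show 0 ≤ pl.v (-x) by rw [pl.v_neg]; exact hx

/-- The maximal ideal `{x : v_𝔭(x) > 0}` of the local ring at `pl`. -/
def maxIdealAt (pl : Place K) : Ideal ↥(integersAt pl) where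
  carrier := {x : ↥(integersAt pl) | (x : K) = 0 ∨ 0 < pl.v (x : K)}
  zero_mem' := Or.inl rfl
  add_mem' := fun {a b} ha hb => by
    have h := pl.hred_add (a := (a : K)) (b := (b : K)) ha hb
    show ((a + b : ↥(integersAt pl)) : K) = 0 ∨ 0 < pl.v ((a + b : ↥(integersAt pl)) : K)
    push_cast
    exact h
  smul_mem' := fun c {x} hx => by
    have h := pl.hred_mul (a := (c : K)) (b := (x : K)) c.2 hx
    show ((c • x : ↥(integersAt pl)) : K) = 0 ∨ 0 < pl.v ((c • x : ↥(integersAt pl)) : K)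
    rw [smul_eq_mul]
    push_cast
    exact h

/-- The residue field `k(𝔭)` at the place `pl`. -/
def Residue (pl : Place K) : Type _ := ↥(integersAt pl) ⧸ maxIdealAt pl

/-- Value at `(x,y)` of `∂F/∂x` for the binary form `F` of degree `d` with coefficient
vector `a`. -/
def formEvalDx (d : ℕ) (a : Fin (d + 1) → K) (x y : K) : K :=
  ∑ i : Fin (d + 1), ((i : ℕ) : K) * a i * x ^ ((i : ℕ) - 1) * y ^ (d - (i : ℕ))

/-- Value at `(x,y)` of `∂G/∂y` for the binary form `G` of degree `d` with coefficient
vector `b`. -/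
def formEvalDy (d : ℕ) (b : Fin (d + 1) → K) (x y : K) : K :=
  ∑ i : Fin (d + 1), ((d - (i : ℕ) : ℕ) : K) * b i * x ^ (i : ℕ) * y ^ (d - (i : ℕ) - 1)

/-- The multiplier `λ_P` at a fixed point `P = [x:y]` of the map lifted by the pair of
degree-`d` binary forms `(a, b)`, where `c` is the scalar with `F(x,y) = c⬝x` and
`G(x,y) = c⬝y`: by the trace formula, `λ = (F_x(x,y) + G_y(x,y) - d⬝c)/c`. -/
noncomputable def multiplier (d : ℕ) (a b : Fin (d + 1) → K) (x y c : K) : K :=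
  (formEvalDx d a x y + formEvalDy d b x y - (d : K) * c) / c

/-! ### Auxiliary valuation toolkit -/

section Toolkit

variable {K : Type*} [Field K] (pl : Place K)

/-- `x` is `pl`-integral. -/
def Iv (x : K) : Prop := 0 ≤ pl.v x

/-- `x` is in the maximal ideal (reduces to zero). -/
def Mm (x : K) : Prop := x = 0 ∨ 0 < pl.v x

/-- `x` is a `pl`-unit. -/
def Uu (x : K) : Prop := x ≠ 0 ∧ pl.v x = 0

variable {pl}

lemma Iv_zero : Iv pl (0 : K) := le_of_eq pl.v_zero.symm

lemma Iv_one : Iv pl (1 : K) := le_of_eq pl.v_one.symm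

lemma Iv_add {x y : K} (hx : Iv pl x) (hy : Iv pl y) : Iv pl (x + y) :=
  pl.v_add_nonneg hx hy

lemma Iv_mul {x y : K} (hx : Iv pl x) (hy : Iv pl y) : Iv pl (x * y) :=
  pl.v_mul_nonneg hx hy

lemma Iv_neg {x : K} (hx : Iv pl x) : Iv pl (-x) := by
  unfold Iv at *; rwa [pl.v_neg]

lemma Iv_sub {x y : K} (hx : Iv pl x) (hy : Iv pl y) : Iv pl (x - y) := by
  rw [sub_eq_add_neg]; exact Iv_add hx (Iv_neg hy)

lemma Iv_pow {x : K} (hx : Iv pl x) (n : ℕ) : Iv pl (x ^ n) := by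
  induction n with
  | zero => simpa using Iv_one
  | succ k ih => rw [pow_succ]; exact Iv_mul ih hx

lemma Iv_sum {ι : Type*} (s : Finset ι) (f : ι → K) (h : ∀ i ∈ s, Iv pl (f i)) :
    Iv pl (∑ i ∈ s, f i) := by
  classical
  induction s using Finset.induction with
  | empty => simpa using Iv_zero
  | insert _ _ hni ih =>
    rw [Finset.sum_insert hni]
    exact Iv_add (h _ (Finset.mem_insert_self _ _))
      (ih fun i hi => h i (Finset.mem_insert_of_mem hi))

lemma Iv_natCast (n : ℕ) : Iv pl ((n : K)) := by
  induction n with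
  | zero => simpa using Iv_zero
  | succ k ih => push_cast; exact Iv_add ih Iv_one

lemma Iv_intCast (n : ℤ) : Iv pl ((n : K)) := by
  rcases Int.eq_nat_or_neg n with ⟨m, rfl | rfl⟩
  · exact_mod_cast Iv_natCast m
  · push_cast; exact Iv_neg (Iv_natCast m)

lemma Mm_zero : Mm pl (0 : K) := Or.inl rfl

lemma Mm_add {x y : K} (hx : Mm pl x) (hy : Mm pl y) : Mm pl (x + y) :=
  pl.hred_add hx hy

lemma Mm_neg {x : K} (hx : Mm pl x) : Mm pl (-x) := by
  rcases hx with h | h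
  · exact Or.inl (by rw [h, neg_zero])
  · exact Or.inr (by rwa [pl.v_neg])

lemma Mm_sub {x y : K} (hx : Mm pl x) (hy : Mm pl y) : Mm pl (x - y) := by
  rw [sub_eq_add_neg]; exact Mm_add hx (Mm_neg hy)

lemma Mm_mul_left {x y : K} (hx : Iv pl x) (hy : Mm pl y) : Mm pl (x * y) :=
  pl.hred_mul hx hy

lemma Mm_mul_right {x y : K} (hx : Mm pl x) (hy : Iv pl y) : Mm pl (x * y) := by
  rw [mul_comm]; exact Mm_mul_left hy hx

lemma Mm.Iv {x : K} (hx : Mm pl x) : Iv pl x := by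
  rcases hx with h | h
  · rw [h]; exact Iv_zero
  · exact le_of_lt h

lemma not_Mm_one : ¬ Mm pl (1 : K) := by
  rintro (h | h)
  · exact one_ne_zero h
  · rw [pl.v_one] at h; exact lt_irrefl 0 h

lemma Uu.not_Mm {x : K} (hx : Uu pl x) : ¬ Mm pl x := by
  rintro (h | h)
  · exact hx.1 h
  · rw [hx.2] at h; exact lt_irrefl 0 h

lemma Uu_of_Iv_not_Mm {x : K} (hx : Iv pl x) (h : ¬ Mm pl x) : Uu pl x := by
  rw [Mm] at h; push_neg at h
  exact ⟨h.1, le_antisymm h.2 hx⟩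

lemma Uu_mul {x y : K} (hx : Uu pl x) (hy : Uu pl y) : Uu pl (x * y) :=
  ⟨mul_ne_zero hx.1 hy.1, by rw [pl.v_mul x y hx.1 hy.1, hx.2, hy.2, add_zero]⟩

lemma Uu_one : Uu pl (1 : K) := ⟨one_ne_zero, pl.v_one⟩

lemma Uu.Iv {x : K} (hx : Uu pl x) : Iv pl x := le_of_eq hx.2.symm

lemma Mm_of_unit_mul {u x : K} (hu : Uu pl u) (h : Mm pl (u * x)) : Mm pl x := by
  rcases h with h | h
  · rcases mul_eq_zero.1 h with h' | h'
    · exact absurd h' hu.1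
    · exact Or.inl h'
  · by_cases hx : x = 0
    · exact Or.inl hx
    · right; rwa [pl.v_mul u x hu.1 hx, hu.2, zero_add] at h

lemma v_inv {u : K} (hu : u ≠ 0) : pl.v u⁻¹ = - pl.v u := by
  have := pl.v_mul u u⁻¹ hu (inv_ne_zero hu)
  rw [mul_inv_cancel₀ hu, pl.v_one] at this
  omega

lemma Mm_div_unit {x u : K} (hx : Mm pl x) (hu : Uu pl u) : Mm pl (x / u) := by
  rcases hx with h | h
  · exact Or.inl (by rw [h, zero_div])
  · by_cases hx0 : x = 0
    · exact Or.inl (by rw [hx0, zero_div])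
    right
    rw [div_eq_mul_inv, pl.v_mul x u⁻¹ hx0 (inv_ne_zero hu.1), v_inv hu.1, hu.2]
    omega

lemma Iv_div_unit {x u : K} (hx : Iv pl x) (hu : Uu pl u) : Iv pl (x / u) := by
  by_cases hx0 : x = 0
  · rw [hx0, zero_div]; exact Iv_zero
  unfold Iv at *
  rw [div_eq_mul_inv, pl.v_mul x u⁻¹ hx0 (inv_ne_zero hu.1), v_inv hu.1, hu.2]
  omega

/-- congruence of products. -/
lemma Mm_mul_sub_mul {x x' y y' : K} (hx : Iv pl x) (hy' : Iv pl y')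
    (h1 : Mm pl (x - x')) (h2 : Mm pl (y - y')) : Mm pl (x * y - x' * y') := by
  have : x * y - x' * y' = x * (y - y') + (x - x') * y' := by ring
  rw [this]
  exact Mm_add (Mm_mul_left hx h2) (Mm_mul_right h1 hy')

lemma Mm_pow_sub_pow {x x' : K} (hx : Iv pl x) (hx' : Iv pl x')
    (h : Mm pl (x - x')) (n : ℕ) : Mm pl (x ^ n - x' ^ n) := by
  induction n with
  | zero => simpa using Mm_zero
  | succ k ih =>
    rw [pow_succ, pow_succ]
    exact Mm_mul_sub_mul (Iv_pow hx k) hx' ih h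

lemma Mm_sum {ι : Type*} (s : Finset ι) (f : ι → K) (h : ∀ i ∈ s, Mm pl (f i)) :
    Mm pl (∑ i ∈ s, f i) := by
  classical
  induction s using Finset.induction with
  | empty => simpa using Mm_zero
  | insert _ _ hni ih =>
    rw [Finset.sum_insert hni]
    exact Mm_add (h _ (Finset.mem_insert_self _ _))
      (ih fun i hi => h i (Finset.mem_insert_of_mem hi))

lemma Mm_sum_sub_sum {ι : Type*} (s : Finset ι) (f g : ι → K)
    (h : ∀ i ∈ s, Mm pl (f i - g i)) : Mm pl (∑ i ∈ s, f i - ∑ i ∈ s, g i) := by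
  rw [← Finset.sum_sub_distrib]
  exact Mm_sum s _ h

/-- `T ≡ 1` implies `T^q ≡ 1`. -/
lemma Mm_pow_sub_one {T : K} (hT : Iv pl T) (h : Mm pl (T - 1)) (q : ℕ) :
    Mm pl (T ^ q - 1) := by
  have := Mm_pow_sub_pow hT Iv_one h q
  simpa using this

lemma Uu_of_Mm_sub {x y : K} (hy : Uu pl y) (hx : Iv pl x) (h : Mm pl (x - y)) :
    Uu pl x := by
  refine Uu_of_Iv_not_Mm hx fun hm => ?_
  have := Mm_sub hm h
  have : Mm pl y := by simpa using this
  exact hy.not_Mm this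

end Toolkit
/-! ### Projective line plumbing -/

section Plumbing

variable {K : Type*} [Field K] {pl : Place K}

lemma vec_ne_zero {u v : K} (h : ¬(u = 0 ∧ v = 0)) : ![u, v] ≠ 0 := by
  intro h0
  exact h ⟨by simpa using congrFun h0 0, by simpa using congrFun h0 1⟩

lemma vec_eta (w : Fin 2 → K) : ![w 0, w 1] = w := by
  funext i; fin_cases i <;> simp

lemma P1.mk_eq_mk_iff_det {u v u' v' : K} (h : ¬(u = 0 ∧ v = 0)) (h' : ¬(u' = 0 ∧ v' = 0)) :
    P1.mk u v h = P1.mk u' v' h' ↔ u * v' - u' * v = 0 := by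
  unfold P1.mk
  rw [Projectivization.mk_eq_mk_iff' K _ _ (vec_ne_zero h) (vec_ne_zero h')]
  constructor
  · rintro ⟨a, ha⟩
    have h0 : a * u' = u := by simpa using congrFun ha 0
    have h1 : a * v' = v := by simpa using congrFun ha 1
    rw [← h0, ← h1]; ring
  · intro hd
    by_cases hu' : u' = 0
    · have hv' : v' ≠ 0 := fun hc => h' ⟨hu', hc⟩
      have hu : u = 0 := by
        have : u * v' = 0 := by rw [hu'] at hd; linear_combination hd
        rcases mul_eq_zero.1 this with h0 | h0
        · exact h0
        · exact absurd h0 hv'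
      refine ⟨v / v', ?_⟩
      funext i; fin_cases i <;> simp [hu', hu, div_mul_cancel₀, hv']
    · refine ⟨u / u', ?_⟩
      have hv : u / u' * v' = v := by
        field_simp
        linear_combination hd
      funext i; fin_cases i <;> simp [div_mul_cancel₀, hu', hv]

lemma P1.point_eq_mk (Q : P1 K) :
    Q = P1.mk (Q.rep 0) (Q.rep 1)
      (fun hc => Q.rep_nonzero (by rw [← vec_eta Q.rep, hc.1, hc.2]; ext i; fin_cases i <;> simp)) := by
  unfold P1.mk
  conv_lhs => rw [← Q.mk_rep]
  apply Eq.symm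
  rw [Projectivization.mk_eq_mk_iff' K _ _ _ (Q.rep_nonzero)]
  exact ⟨1, by rw [one_smul, vec_eta]⟩

lemma P1.rep_mk {u v : K} (h : ¬(u = 0 ∧ v = 0)) :
    ∃ t : K, t ≠ 0 ∧ (P1.mk u v h).rep 0 = t * u ∧ (P1.mk u v h).rep 1 = t * v := by
  obtain ⟨a, ha⟩ := Projectivization.exists_smul_eq_mk_rep K ![u, v] (vec_ne_zero h)
  refine ⟨a, a.ne_zero, ?_, ?_⟩
  · have := congrFun ha 0; simpa [P1.mk, Units.smul_def] using this.symm
  · have := congrFun ha 1; simpa [P1.mk, Units.smul_def] using this.symm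

/-- Unit-min coordinates: integral with a unit among them. -/
def GoodCoords (pl : Place K) (u v : K) : Prop :=
  Iv pl u ∧ Iv pl v ∧ (Uu pl u ∨ Uu pl v)

lemma GoodCoords.ne {u v : K} (h : GoodCoords pl u v) : ¬(u = 0 ∧ v = 0) := by
  rintro ⟨rfl, rfl⟩
  rcases h.2.2 with h' | h' <;> exact h'.1 rfl

lemma vminVec_smul {t u v : K} (ht : t ≠ 0) (hg : GoodCoords pl u v)
    (w : Fin 2 → K) (hw0 : w 0 = t * u) (hw1 : w 1 = t * v) :
    vminVec pl w = pl.v t := by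
  obtain ⟨hu, hv, hor⟩ := hg
  unfold vminVec
  rw [hw0, hw1]
  by_cases hu0 : u = 0
  · have hvu : Uu pl v := by
      rcases hor with h' | h'
      · exact absurd hu0 h'.1
      · exact h'
    rw [if_pos (by rw [hu0, mul_zero]), hu0] at *
    rw [pl.v_mul t v ht hvu.1, hvu.2, add_zero]
  · by_cases hv0 : v = 0
    · have huu : Uu pl u := by
        rcases hor with h' | h'
        · exact h'
        · exact absurd hv0 h'.1
      rw [if_neg (mul_ne_zero ht hu0), if_pos (by rw [hv0, mul_zero])]
      rw [pl.v_mul t u ht hu0, huu.2, add_zero]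
    · rw [if_neg (mul_ne_zero ht hu0), if_neg (mul_ne_zero ht hv0),
        pl.v_mul t u ht hu0, pl.v_mul t v ht hv0]
      have hmin : min (pl.v u) (pl.v v) = 0 := by
        rcases hor with h' | h'
        · have := h'.2; unfold Iv at hv; omega
        · have := h'.2; unfold Iv at hu; omega
      omega

/-- The key dictionary: for unit-min integral coordinates, positivity of the
logarithmic distance is detected by the determinant being in the maximal ideal. -/
lemma logDist_pos_iff {u v u' v' : K} (hg : GoodCoords pl u v) (hg' : GoodCoords pl u' v')
    (h : ¬(u = 0 ∧ v = 0)) (h' : ¬(u' = 0 ∧ v' = 0)) :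
    0 < logDist pl (P1.mk u v h) (P1.mk u' v' h') ↔ Mm pl (u * v' - u' * v) := by
  obtain ⟨t, ht, hw0, hw1⟩ := P1.rep_mk h
  obtain ⟨s, hs, hw0', hw1'⟩ := P1.rep_mk h'
  have hdet : (P1.mk u v h).rep 0 * (P1.mk u' v' h').rep 1 -
      (P1.mk u' v' h').rep 0 * (P1.mk u v h).rep 1 = t * s * (u * v' - u' * v) := by
    rw [hw0, hw1, hw0', hw1']; ring
  have hv1 : vminVec pl (P1.mk u v h).rep = pl.v t := vminVec_smul ht hg _ hw0 hw1
  have hv2 : vminVec pl (P1.mk u' v' h').rep = pl.v s := vminVec_smul hs hg' _ hw0' hw1'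
  unfold logDist
  rw [hdet, hv1, hv2]
  by_cases hD : u * v' - u' * v = 0
  · rw [hD, mul_zero]
    unfold extv
    rw [if_pos rfl]
    simp [Mm, hD]
  · have hts : t * s * (u * v' - u' * v) ≠ 0 := by
      exact mul_ne_zero (mul_ne_zero ht hs) hD
    unfold extv
    rw [if_neg hts]
    rw [pl.v_mul _ _ (mul_ne_zero ht hs) hD, pl.v_mul t s ht hs]
    rw [← WithTop.coe_add]
    constructor
    · intro hlt
      right
      have : (0 : ℤ) < pl.v t + pl.v s + pl.v (u * v' - u' * v) + (-(pl.v t) - pl.v s) := by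
        exact_mod_cast hlt
      omega
    · rintro (h0 | h0)
      · exact absurd h0 hD
      · have : (0 : ℤ) < pl.v t + pl.v s + pl.v (u * v' - u' * v) + (-(pl.v t) - pl.v s) := by
          omega
        exact_mod_cast this

lemma logDist_self_pos (P : P1 K) : 0 < logDist pl P P := by
  unfold logDist
  have : extv pl (P.rep 0 * P.rep 1 - P.rep 0 * P.rep 1) = ⊤ := by
    unfold extv; rw [if_pos (by ring)]
  rw [this, WithTop.top_add]
  exact WithTop.coe_lt_top _

/-- Every point admits unit-min integral coordinates. -/
lemma exists_goodCoords (pl : Place K) (Q : P1 K) :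
    ∃ (u v : K) (h : ¬(u = 0 ∧ v = 0)), Q = P1.mk u v h ∧ GoodCoords pl u v := by
  set w0 := Q.rep 0 with hw0
  set w1 := Q.rep 1 with hw1
  have hQ := P1.point_eq_mk Q
  have hne : ¬(w0 = 0 ∧ w1 = 0) := by
    rintro ⟨h0, h1⟩
    exact Q.rep_nonzero (by rw [← vec_eta Q.rep, ← hw0, ← hw1, h0, h1]; ext i; fin_cases i <;> simp)
  obtain ⟨μ, hμ, hvμ⟩ := pl.v_surj (vminVec pl ![w0, w1])
  refine ⟨w0 / μ, w1 / μ, ?_, ?_, ?_⟩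
  · rintro ⟨h0, h1⟩
    exact hne ⟨by field_simp at h0; simpa using h0, by field_simp at h1; simpa using h1⟩
  · rw [hQ]
    rw [P1.mk_eq_mk_iff_det]
    field_simp
    rw [← hw0, ← hw1]; ring
  · -- goodness
    unfold GoodCoords
    unfold vminVec at hvμ
    by_cases h0 : w0 = 0
    · have h1 : w1 ≠ 0 := fun hc => hne ⟨h0, hc⟩
      rw [if_pos (by simpa using h0)] at hvμ
      simp only [Matrix.cons_val_one, Matrix.head_cons, Matrix.cons_val_zero] at hvμ
      have hvv : pl.v (w1 / μ) = 0 := by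
        rw [div_eq_mul_inv, pl.v_mul _ _ h1 (inv_ne_zero hμ), v_inv hμ, hvμ]; ring
      refine ⟨by rw [h0, zero_div]; exact Iv_zero, le_of_eq hvv.symm, Or.inr ⟨div_ne_zero h1 hμ, hvv⟩⟩
    · by_cases h1 : w1 = 0
      · rw [if_neg (by simpa using h0), if_pos (by simpa using h1)] at hvμ
        simp only [Matrix.cons_val_zero] at hvμ
        have hvv : pl.v (w0 / μ) = 0 := by
          rw [div_eq_mul_inv, pl.v_mul _ _ h0 (inv_ne_zero hμ), v_inv hμ, hvμ]; ring
        refine ⟨le_of_eq hvv.symm, by rw [h1, zero_div]; exact Iv_zero, Or.inl ⟨div_ne_zero h0 hμ, hvv⟩⟩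
      · rw [if_neg (by simpa using h0), if_neg (by simpa using h1)] at hvμ
        simp only [Matrix.cons_val_zero, Matrix.cons_val_one, Matrix.head_cons] at hvμ
        have hv0 : pl.v (w0 / μ) = pl.v w0 - min (pl.v w0) (pl.v w1) := by
          rw [div_eq_mul_inv, pl.v_mul _ _ h0 (inv_ne_zero hμ), v_inv hμ, hvμ]; ring
        have hv1 : pl.v (w1 / μ) = pl.v w1 - min (pl.v w0) (pl.v w1) := by
          rw [div_eq_mul_inv, pl.v_mul _ _ h1 (inv_ne_zero hμ), v_inv hμ, hvμ]; ring
        rcases le_total (pl.v w0) (pl.v w1) with hle | hle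
        · exact ⟨by unfold Iv; omega, by unfold Iv; omega,
            Or.inl ⟨div_ne_zero h0 hμ, by omega⟩⟩
        · exact ⟨by unfold Iv; omega, by unfold Iv; omega,
            Or.inr ⟨div_ne_zero h1 hμ, by omega⟩⟩

end Plumbing
/-! ### Binary forms: divisibility and resultant elimination -/

section Forms

variable {K : Type*} [Field K] {pl : Place K}

lemma Uu_pow {x : K} (hx : Uu pl x) (n : ℕ) : Uu pl (x ^ n) := by
  induction n with
  | zero => simpa using Uu_one
  | succ k ih => rw [pow_succ]; exact Uu_mul ih hx

lemma Iv_formEval {d : ℕ} {a : Fin (d+1) → K} (hia : ∀ i, Iv pl (a i))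
    {u v : K} (hu : Iv pl u) (hv : Iv pl v) : Iv pl (formEval d a u v) :=
  Iv_sum _ _ fun i _ => Iv_mul (Iv_mul (hia i) (Iv_pow hu _)) (Iv_pow hv _)

/-- Factorization of a difference of crossed monomials. -/
lemma mono_diff_factor {d : ℕ} (i j : ℕ) (hi : i ≤ d) (hj : j ≤ d) (u v u' v' : K)
    (hu : Iv pl u) (hv : Iv pl v) (hu' : Iv pl u') (hv' : Iv pl v') :
    ∃ q : K, u ^ i * v ^ (d - i) * (u' ^ j * v' ^ (d - j)) -
        u' ^ i * v' ^ (d - i) * (u ^ j * v ^ (d - j)) = (u * v' - u' * v) * q ∧ Iv pl q := by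
  rcases le_or_gt i j with hij | hij
  · set k := j - i with hk
    have h1 : d - i = (d - j) + k := by omega
    have h2 : j = i + k := by omega
    have hg := geom_sum₂_mul (u' * v) (u * v') k
    refine ⟨-(u ^ i * u' ^ i * v ^ (d - j) * v' ^ (d - j) *
      ∑ t ∈ Finset.range k, (u' * v) ^ t * (u * v') ^ (k - 1 - t)), ?_, ?_⟩
    · set e := d - j with he
      rw [h2, h1]
      simp only [pow_add]
      linear_combination (-(u ^ i * u' ^ i * v ^ e * v' ^ e)) * hg
    · exact Iv_neg (Iv_mul (Iv_mul (Iv_mul (Iv_mul (Iv_pow hu _) (Iv_pow hu' _))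
        (Iv_pow hv _)) (Iv_pow hv' _))
        (Iv_sum _ _ fun t _ => Iv_mul (Iv_pow (Iv_mul hu' hv) _) (Iv_pow (Iv_mul hu hv') _)))
  · set k := i - j with hk
    have h1 : d - j = (d - i) + k := by omega
    have h2 : i = j + k := by omega
    have hg := geom_sum₂_mul (u * v') (u' * v) k
    refine ⟨u ^ j * u' ^ j * v ^ (d - i) * v' ^ (d - i) *
      ∑ t ∈ Finset.range k, (u * v') ^ t * (u' * v) ^ (k - 1 - t), ?_, ?_⟩
    · set e := d - i with he
      rw [h2, h1]
      simp only [pow_add]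
      linear_combination (-(u ^ j * u' ^ j * v ^ e * v' ^ e)) * hg
    · exact Iv_mul (Iv_mul (Iv_mul (Iv_mul (Iv_pow hu _) (Iv_pow hu' _))
        (Iv_pow hv _)) (Iv_pow hv' _))
        (Iv_sum _ _ fun t _ => Iv_mul (Iv_pow (Iv_mul hu hv') _) (Iv_pow (Iv_mul hu' hv) _))

/-- L1: the crossed difference of values of a pair of forms is divisible by the
determinant, with integral quotient. -/
lemma cross_diff_factor {d : ℕ} (a b : Fin (d+1) → K)
    (hia : ∀ i, Iv pl (a i)) (hib : ∀ i, Iv pl (b i)) (u v u' v' : K)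
    (hu : Iv pl u) (hv : Iv pl v) (hu' : Iv pl u') (hv' : Iv pl v') :
    ∃ H : K, formEval d a u v * formEval d b u' v' - formEval d a u' v' * formEval d b u v
      = (u * v' - u' * v) * H ∧ Iv pl H := by
  have hq : ∀ i j : Fin (d+1), ∃ q : K,
      u ^ (i:ℕ) * v ^ (d - (i:ℕ)) * (u' ^ (j:ℕ) * v' ^ (d - (j:ℕ))) -
        u' ^ (i:ℕ) * v' ^ (d - (i:ℕ)) * (u ^ (j:ℕ) * v ^ (d - (j:ℕ))) =
        (u * v' - u' * v) * q ∧ Iv pl q := fun i j =>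
    mono_diff_factor (i:ℕ) (j:ℕ) (by omega) (by omega) u v u' v' hu hv hu' hv'
  choose q hq1 hq2 using hq
  refine ⟨∑ i, ∑ j, a i * b j * q i j, ?_, ?_⟩
  · unfold formEval
    rw [Finset.sum_mul_sum, Finset.sum_mul_sum, ← Finset.sum_sub_distrib, Finset.mul_sum]
    refine Finset.sum_congr rfl fun i _ => ?_
    rw [← Finset.sum_sub_distrib, Finset.mul_sum]
    refine Finset.sum_congr rfl fun j _ => ?_
    have := hq1 i j
    linear_combination (a i * b j) * this
  · exact Iv_sum _ _ fun i _ => Iv_sum _ _ fun j _ =>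
      Iv_mul (Iv_mul (hia i) (hib j)) (hq2 i j)

lemma Iv_det {n : ℕ} {M : Matrix (Fin n) (Fin n) K} (h : ∀ i j, Iv pl (M i j)) :
    Iv pl M.det := by
  rw [Matrix.det_apply]
  refine Iv_sum _ _ fun σ _ => ?_
  rcases Int.units_eq_one_or (Equiv.Perm.sign σ) with hs | hs <;>
    rw [hs] <;> simp only [one_smul, Units.neg_smul, neg_smul] <;>
    [skip; apply Iv_neg] <;>
    exact Finset.prod_induction _ _ (fun _ _ => Iv_mul) Iv_one fun i _ => h _ _

lemma Iv_sylvester {d : ℕ} {a b : Fin (d+1) → K}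
    (hia : ∀ i, Iv pl (a i)) (hib : ∀ i, Iv pl (b i)) (i j : Fin (d + d)) :
    Iv pl (sylvester d a b i j) := by
  unfold sylvester
  simp only [Matrix.of_apply]
  split_ifs <;> first | exact hia _ | exact hib _ | exact Iv_zero

/-- The Sylvester matrix applied to the vector of monomials. -/
lemma sylvester_mulVec {d : ℕ} (a b : Fin (d+1) → K) (u v : K)
    (i : Fin (d + d)) :
    (sylvester d a b).mulVec (fun j : Fin (d + d) => u ^ (j:ℕ) * v ^ (d + d - 1 - (j:ℕ))) i =
      if (i:ℕ) < d then u ^ (i:ℕ) * v ^ (d - 1 - (i:ℕ)) * formEval d a u v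
      else u ^ ((i:ℕ) - d) * v ^ (d + d - 1 - (i:ℕ)) * formEval d b u v := by
  classical
  have hsum : (sylvester d a b).mulVec
      (fun j : Fin (d + d) => u ^ (j:ℕ) * v ^ (d + d - 1 - (j:ℕ))) i =
      ∑ j : Fin (d+d), sylvester d a b i j * (u ^ (j:ℕ) * v ^ (d + d - 1 - (j:ℕ))) := rfl
  have hi2 : (i:ℕ) < d + d := i.isLt
  by_cases hi : (i:ℕ) < d
  · rw [if_pos hi, hsum]
    have step1 : ∀ j : Fin (d+d), sylvester d a b i j * (u ^ (j:ℕ) * v ^ (d+d-1-(j:ℕ))) =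
        ∑ t : Fin (d+1), if ((j:ℕ) = (i:ℕ) + (t:ℕ))
          then a t * (u ^ (j:ℕ) * v ^ (d+d-1-(j:ℕ))) else 0 := by
      intro j
      unfold sylvester
      simp only [Matrix.of_apply]
      rw [dif_pos hi]
      by_cases hw : (i:ℕ) ≤ (j:ℕ) ∧ (j:ℕ) ≤ (i:ℕ) + d
      · rw [dif_pos hw]
        rw [Finset.sum_eq_single (⟨(j:ℕ) - (i:ℕ), by omega⟩ : Fin (d+1))]
        · rw [if_pos (by simp only [Fin.val_mk]; omega)]
        · intro t _ ht
          rw [if_neg]; intro hc; apply ht; apply Fin.ext; simp only [Fin.val_mk]; omega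
        · intro hmem; exact absurd (Finset.mem_univ _) hmem
      · rw [dif_neg hw, zero_mul]
        symm; apply Finset.sum_eq_zero; intro t _
        rw [if_neg]; intro hc; apply hw
        have := t.isLt; omega
    rw [Finset.sum_congr rfl fun j _ => step1 j, Finset.sum_comm]
    unfold formEval
    rw [Finset.mul_sum]
    refine Finset.sum_congr rfl fun t _ => ?_
    rw [Finset.sum_eq_single (⟨(i:ℕ)+(t:ℕ), by have := t.isLt; omega⟩ : Fin (d+d))]
    · rw [if_pos (by simp only [Fin.val_mk])]
      have ht : (t:ℕ) ≤ d := by have := t.isLt; omega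
      rw [show ((⟨(i:ℕ)+(t:ℕ), by have := t.isLt; omega⟩ : Fin (d+d)) : ℕ) = (i:ℕ)+(t:ℕ) from rfl]
      rw [show d+d-1-((i:ℕ)+(t:ℕ)) = (d-1-(i:ℕ))+(d-(t:ℕ)) by omega, pow_add, pow_add]
      ring
    · intro j _ hj; rw [if_neg]; intro hc; apply hj; exact Fin.ext (by simp only [Fin.val_mk]; omega)
    · intro hmem; exact absurd (Finset.mem_univ _) hmem
  · rw [if_neg hi, hsum]
    have hid : d ≤ (i:ℕ) := le_of_not_gt hi
    have step1 : ∀ j : Fin (d+d), sylvester d a b i j * (u ^ (j:ℕ) * v ^ (d+d-1-(j:ℕ))) =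
        ∑ t : Fin (d+1), if ((j:ℕ) = ((i:ℕ) - d) + (t:ℕ))
          then b t * (u ^ (j:ℕ) * v ^ (d+d-1-(j:ℕ))) else 0 := by
      intro j
      unfold sylvester
      simp only [Matrix.of_apply]
      rw [dif_neg hi]
      by_cases hw : (i:ℕ) - d ≤ (j:ℕ) ∧ (j:ℕ) ≤ (i:ℕ)
      · rw [dif_pos hw]
        rw [Finset.sum_eq_single (⟨(j:ℕ) - ((i:ℕ) - d), by omega⟩ : Fin (d+1))]
        · rw [if_pos (by simp only [Fin.val_mk]; omega)]
        · intro t _ ht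
          rw [if_neg]; intro hc; apply ht; apply Fin.ext; simp only [Fin.val_mk]; omega
        · intro hmem; exact absurd (Finset.mem_univ _) hmem
      · rw [dif_neg hw, zero_mul]
        symm; apply Finset.sum_eq_zero; intro t _
        rw [if_neg]; intro hc; apply hw
        have := t.isLt; omega
    rw [Finset.sum_congr rfl fun j _ => step1 j, Finset.sum_comm]
    unfold formEval
    rw [Finset.mul_sum]
    refine Finset.sum_congr rfl fun t _ => ?_
    rw [Finset.sum_eq_single (⟨((i:ℕ)-d)+(t:ℕ), by have := t.isLt; omega⟩ : Fin (d+d))]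
    · rw [if_pos (by simp only [Fin.val_mk])]
      have ht : (t:ℕ) ≤ d := by have := t.isLt; omega
      rw [show ((⟨((i:ℕ)-d)+(t:ℕ), by have := t.isLt; omega⟩ : Fin (d+d)) : ℕ)
        = ((i:ℕ)-d)+(t:ℕ) from rfl]
      rw [show d+d-1-(((i:ℕ)-d)+(t:ℕ)) = (d+d-1-(i:ℕ))+(d-(t:ℕ)) by omega, pow_add, pow_add]
      ring
    · intro j _ hj; rw [if_neg]; intro hc; apply hj; exact Fin.ext (by simp only [Fin.val_mk]; omega)
    · intro hmem; exact absurd (Finset.mem_univ _) hmem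

/-- L2: an integral pair of forms with unit resultant takes unit-min values
at unit-min points. -/
lemma formEval_goodCoords {d : ℕ} (hd : 1 ≤ d) {a b : Fin (d+1) → K}
    (hia : ∀ i, Iv pl (a i)) (hib : ∀ i, Iv pl (b i))
    (hres0 : resultant d a b ≠ 0) (hres : pl.v (resultant d a b) = 0)
    {u v : K} (hg : GoodCoords pl u v) :
    GoodCoords pl (formEval d a u v) (formEval d b u v) := by
  classical
  obtain ⟨hu, hv, hor⟩ := hg
  refine ⟨Iv_formEval hia hu hv, Iv_formEval hib hu hv, ?_⟩
  by_contra hcon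
  push_neg at hcon
  obtain ⟨hnF, hnG⟩ := hcon
  have hMF : Mm pl (formEval d a u v) := by
    by_contra hM; exact hnF (Uu_of_Iv_not_Mm (Iv_formEval hia hu hv) hM)
  have hMG : Mm pl (formEval d b u v) := by
    by_contra hM; exact hnG (Uu_of_Iv_not_Mm (Iv_formEval hib hu hv) hM)
  -- the adjugate identity
  set S := sylvester d a b with hS
  set vmon : Fin (d+d) → K := fun j => u ^ (j:ℕ) * v ^ (d + d - 1 - (j:ℕ)) with hvmon
  have hkey : ∀ j0 : Fin (d+d), resultant d a b * vmon j0 =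
      ∑ i : Fin (d+d), S.adjugate j0 i * (S.mulVec vmon i) := by
    intro j0
    have h1 : (S.adjugate * S).mulVec vmon j0 = ∑ i, S.adjugate j0 i * (S.mulVec vmon i) := by
      rw [← Matrix.mulVec_mulVec]
      rfl
    rw [Matrix.adjugate_mul] at h1
    rw [← h1]
    unfold resultant
    rw [Matrix.smul_mulVec, Matrix.one_mulVec]
    simp [hS]
  have hadj : ∀ j0 i : Fin (d+d), Iv pl (S.adjugate j0 i) := by
    intro j0 i
    rw [Matrix.adjugate_apply]
    apply Iv_det
    intro i' j'
    rw [Matrix.updateRow_apply]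
    split_ifs with h
    · rcases eq_or_ne i i' with h2 | h2
      · subst h2; simp [Pi.single_apply]; split_ifs <;> [exact Iv_one; exact Iv_zero]
      · simp [Pi.single_apply]; split_ifs <;> [exact Iv_one; exact Iv_zero]
    · exact Iv_sylvester hia hib _ _
  have hMmkey : ∀ j0 : Fin (d+d), Mm pl (resultant d a b * vmon j0) := by
    intro j0
    rw [hkey j0]
    refine Mm_sum _ _ fun i _ => ?_
    have hmv := sylvester_mulVec a b u v i
    apply Mm_mul_left (hadj j0 i)
    rw [hS, hvmon, hmv]
    split_ifs with hcase
    · exact Mm_mul_left (Iv_mul (Iv_pow hu _) (Iv_pow hv _)) hMF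
    · exact Mm_mul_left (Iv_mul (Iv_pow hu _) (Iv_pow hv _)) hMG
  rcases hor with hUu | hUv
  · have := hMmkey ⟨d + d - 1, by omega⟩
    have hvm : vmon ⟨d + d - 1, by omega⟩ = u ^ (d+d-1) := by
      simp [hvmon]
    rw [hvm] at this
    exact (Uu_mul ⟨hres0, hres⟩ (Uu_pow hUu _)).not_Mm this
  · have := hMmkey ⟨0, by omega⟩
    have hvm : vmon ⟨0, by omega⟩ = v ^ (d+d-1) := by
      simp [hvmon]
    rw [hvm] at this
    exact (Uu_mul ⟨hres0, hres⟩ (Uu_pow hUv _)).not_Mm this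

end Forms
/-! ### One-variable machinery for the chart -/

section OneVar

variable {K : Type*} [Field K] {pl : Place K}

/-- Divided difference of crossed powers. -/
def qq (i j : ℕ) (z w : K) : K :=
  if i < j then -(z^i * w^i * ∑ t ∈ Finset.range (j-i), w^t * z^(j-i-1-t))
  else if j < i then z^j * w^j * ∑ t ∈ Finset.range (i-j), z^t * w^(i-j-1-t)
  else 0

lemma qq_spec (i j : ℕ) (z w : K) : z^i * w^j - w^i * z^j = (z - w) * qq i j z w := by
  unfold qq
  rcases lt_trichotomy i j with h | h | h
  · rw [if_pos h]
    set k := j - i with hk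
    have h2 : j = i + k := by omega
    have hg := geom_sum₂_mul w z k
    rw [h2]
    simp only [pow_add]
    linear_combination (-(z^i * w^i)) * hg
  · subst h
    rw [if_neg (lt_irrefl i), if_neg (lt_irrefl i)]
    ring
  · rw [if_neg (by omega), if_pos h]
    set k := i - j with hk
    have h2 : i = j + k := by omega
    have hg := geom_sum₂_mul z w k
    rw [h2]
    simp only [pow_add]
    linear_combination (-(z^j * w^j)) * hg

lemma qq_Iv (i j : ℕ) {z w : K} (hz : Iv pl z) (hw : Iv pl w) : Iv pl (qq i j z w) := by
  unfold qq
  split_ifs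
  · exact Iv_neg (Iv_mul (Iv_mul (Iv_pow hz _) (Iv_pow hw _))
      (Iv_sum _ _ fun t _ => Iv_mul (Iv_pow hw _) (Iv_pow hz _)))
  · exact Iv_mul (Iv_mul (Iv_pow hz _) (Iv_pow hw _))
      (Iv_sum _ _ fun t _ => Iv_mul (Iv_pow hz _) (Iv_pow hw _))
  · exact Iv_zero

lemma qq_cong (i j : ℕ) {z w z' w' : K} (hz : Iv pl z) (hw : Iv pl w)
    (hz' : Iv pl z') (hw' : Iv pl w') (h1 : Mm pl (z - z')) (h2 : Mm pl (w - w')) :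
    Mm pl (qq i j z w - qq i j z' w') := by
  unfold qq
  split_ifs
  · have : -(z^i * w^i * ∑ t ∈ Finset.range (j-i), w^t * z^(j-i-1-t)) -
        -(z'^i * w'^i * ∑ t ∈ Finset.range (j-i), w'^t * z'^(j-i-1-t)) =
        -((z^i * w^i * ∑ t ∈ Finset.range (j-i), w^t * z^(j-i-1-t)) -
          (z'^i * w'^i * ∑ t ∈ Finset.range (j-i), w'^t * z'^(j-i-1-t))) := by ring
    rw [this]
    refine Mm_neg (Mm_mul_sub_mul (Iv_mul (Iv_pow hz _) (Iv_pow hw _))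
      (Iv_sum _ _ fun t _ => Iv_mul (Iv_pow hw' _) (Iv_pow hz' _))
      (Mm_mul_sub_mul (Iv_pow hz _) (Iv_pow hw' _) (Mm_pow_sub_pow hz hz' h1 _)
        (Mm_pow_sub_pow hw hw' h2 _))
      (Mm_sum_sub_sum _ _ _ fun t _ => Mm_mul_sub_mul (Iv_pow hw _) (Iv_pow hz' _)
        (Mm_pow_sub_pow hw hw' h2 _) (Mm_pow_sub_pow hz hz' h1 _)))
  · refine Mm_mul_sub_mul (Iv_mul (Iv_pow hz _) (Iv_pow hw _))
      (Iv_sum _ _ fun t _ => Iv_mul (Iv_pow hz' _) (Iv_pow hw' _))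
      (Mm_mul_sub_mul (Iv_pow hz _) (Iv_pow hw' _) (Mm_pow_sub_pow hz hz' h1 _)
        (Mm_pow_sub_pow hw hw' h2 _))
      (Mm_sum_sub_sum _ _ _ fun t _ => Mm_mul_sub_mul (Iv_pow hz _) (Iv_pow hw' _)
        (Mm_pow_sub_pow hz hz' h1 _) (Mm_pow_sub_pow hw hw' h2 _))
  · simpa using Mm_zero

/-- Divided difference of a pair of chart polynomials. -/
def QQc (d : ℕ) (a b : Fin (d+1) → K) (y z w : K) : K :=
  ∑ i, ∑ j, a i * b j * y^(d-(i:ℕ)) * y^(d-(j:ℕ)) * qq (i:ℕ) (j:ℕ) z w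

lemma QQc_spec (d : ℕ) (a b : Fin (d+1) → K) (y z w : K) :
    formEval d a z y * formEval d b w y - formEval d a w y * formEval d b z y =
      (z - w) * QQc d a b y z w := by
  unfold formEval QQc
  rw [Finset.sum_mul_sum, Finset.sum_mul_sum, ← Finset.sum_sub_distrib, Finset.mul_sum]
  refine Finset.sum_congr rfl fun i _ => ?_
  rw [← Finset.sum_sub_distrib, Finset.mul_sum]
  refine Finset.sum_congr rfl fun j _ => ?_
  have := qq_spec (i:ℕ) (j:ℕ) z w
  linear_combination (a i * b j * y^(d-(i:ℕ)) * y^(d-(j:ℕ))) * this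

lemma QQc_Iv {d : ℕ} {a b : Fin (d+1) → K} (hia : ∀ i, Iv pl (a i)) (hib : ∀ i, Iv pl (b i))
    {y z w : K} (hy : Iv pl y) (hz : Iv pl z) (hw : Iv pl w) : Iv pl (QQc d a b y z w) :=
  Iv_sum _ _ fun i _ => Iv_sum _ _ fun j _ =>
    Iv_mul (Iv_mul (Iv_mul (Iv_mul (hia i) (hib j)) (Iv_pow hy _)) (Iv_pow hy _))
      (qq_Iv _ _ hz hw)

lemma QQc_cong {d : ℕ} {a b : Fin (d+1) → K} (hia : ∀ i, Iv pl (a i)) (hib : ∀ i, Iv pl (b i))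
    {y z w z' w' : K} (hy : Iv pl y) (hz : Iv pl z) (hw : Iv pl w)
    (hz' : Iv pl z') (hw' : Iv pl w') (h1 : Mm pl (z - z')) (h2 : Mm pl (w - w')) :
    Mm pl (QQc d a b y z w - QQc d a b y z' w') := by
  refine Mm_sum_sub_sum _ _ _ fun i _ => Mm_sum_sub_sum _ _ _ fun j _ => ?_
  refine Mm_mul_sub_mul (Iv_mul (Iv_mul (Iv_mul (hia i) (hib j)) (Iv_pow hy _)) (Iv_pow hy _))
    (qq_Iv _ _ hz' hw') (by simpa using Mm_zero) (qq_cong _ _ hz hw hz' hw' h1 h2)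

/-- One-variable finite difference of a form. -/
lemma form_sub_factor (d : ℕ) (cf : Fin (d+1) → K) (y z x : K) :
    ∃ W : K, formEval d cf z y - formEval d cf x y = (z - x) * W ∧
      ((∀ i, Iv pl (cf i)) → Iv pl y → Iv pl z → Iv pl x → Iv pl W) := by
  refine ⟨∑ i, cf i * y^(d-(i:ℕ)) * qq (i:ℕ) 0 z x, ?_, ?_⟩
  · unfold formEval
    rw [← Finset.sum_sub_distrib, Finset.mul_sum]
    refine Finset.sum_congr rfl fun i _ => ?_
    have := qq_spec (i:ℕ) 0 z x
    simp only [pow_zero, mul_one] at this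
    linear_combination (cf i * y^(d-(i:ℕ))) * this
  · intro h1 h2 h3 h4
    exact Iv_sum _ _ fun i _ => Iv_mul (Iv_mul (h1 i) (Iv_pow h2 _)) (qq_Iv _ _ h3 h4)

/-- Taylor expansion of a power to second order. -/
lemma pow_taylor {x π : K} (hx : Iv pl x) (hπ : Iv pl π) (i : ℕ) :
    ∃ C : K, (x + π)^i = x^i + (i:K) * x^(i-1) * π + π^2 * C ∧ Iv pl C := by
  induction i with
  | zero => exact ⟨0, by norm_num, Iv_zero⟩
  | succ n ih =>
    obtain ⟨C, hC, hCI⟩ := ih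
    have hxx : (n:K) * x^(n-1) * x = (n:K) * x^n := by
      by_cases h0 : n = 0
      · subst h0; simp
      · have : x^(n-1) * x = x^n := by
          rw [← pow_succ]; congr 1; omega
        rw [mul_assoc, this]
    refine ⟨C * x + (n:K) * x^(n-1) + π * C, ?_, ?_⟩
    · have : (x + π)^(n+1) = (x + π)^n * (x + π) := by rw [pow_succ]
      rw [this, hC]
      have hn1 : ((n:ℕ):K) + 1 = ((n+1 : ℕ):K) := by push_cast; ring
      have hxn : x^(n+1) = x^n * x := by rw [pow_succ]
      have hxn2 : (n+1 : ℕ) - 1 = n := by omega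
      rw [hxn2]
      push_cast
      calc (x^n + (n:K) * x^(n-1) * π + π^2 * C) * (x + π)
          = x^n * x + ((n:K) * x^(n-1) * x) * π + (x^n * π + π^2 * C * x
            + (n:K) * x^(n-1) * π^2 + π^3 * C) := by ring
        _ = x^(n+1) + ((n:K)+1) * x^n * π + π^2 * (C * x + (n:K) * x^(n-1) + π * C) := by
            rw [hxx, ← hxn]; ring
    · exact Iv_add (Iv_add (Iv_mul hCI hx) (Iv_mul (Iv_natCast n) (Iv_pow hx _)))
        (Iv_mul hπ hCI)

/-- Taylor expansion of a chart polynomial to second order. -/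
lemma form_taylor {d : ℕ} (cf : Fin (d+1) → K) {x y π : K}
    (hcf : ∀ i, Iv pl (cf i)) (hx : Iv pl x) (hy : Iv pl y) (hπ : Iv pl π) :
    ∃ R : K, formEval d cf (x + π) y =
      formEval d cf x y + π * formEvalDx d cf x y + π^2 * R ∧ Iv pl R := by
  have h := fun i : Fin (d+1) => pow_taylor (pl := pl) hx hπ (i:ℕ)
  choose C hC hCI using h
  refine ⟨∑ i, cf i * C i * y^(d-(i:ℕ)), ?_, ?_⟩
  · unfold formEval formEvalDx
    rw [Finset.mul_sum, Finset.mul_sum, ← Finset.sum_add_distrib, ← Finset.sum_add_distrib]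
    refine Finset.sum_congr rfl fun i _ => ?_
    rw [hC i]
    ring
  · exact Iv_sum _ _ fun i _ => Iv_mul (Iv_mul (hcf i) (hCI i)) (Iv_pow hy _)

/-- Euler identity for the pair of partial derivative evaluations. -/
lemma euler_form (d : ℕ) (cf : Fin (d+1) → K) (x y : K) :
    x * formEvalDx d cf x y + y * formEvalDy d cf x y = (d:K) * formEval d cf x y := by
  unfold formEval formEvalDx formEvalDy
  rw [Finset.mul_sum, Finset.mul_sum, Finset.mul_sum, ← Finset.sum_add_distrib]
  refine Finset.sum_congr rfl fun i _ => ?_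
  have hi : (i:ℕ) ≤ d := by omega
  by_cases h0 : (i:ℕ) = 0
  · rw [h0]
    by_cases hd0 : d = 0
    · subst hd0; norm_num
    · have hyy : y * y^(d-0-1) = y^(d-0) := by
        rw [← pow_succ']; congr 1; omega
      push_cast
      calc x * ((0:K) * cf i * x^(0-1) * y^(d-0)) + y * (((d - 0 : ℕ):K) * cf i * x^0 * y^(d-0-1))
          = ((d - 0 : ℕ):K) * cf i * x^0 * (y * y^(d-0-1)) := by ring
        _ = (d:K) * (cf i * x^0 * y^(d-0)) := by rw [hyy]; rw [Nat.sub_zero]; ring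
  · by_cases hdi : (i:ℕ) = d
    · have hxx : x * x^((i:ℕ)-1) = x^(i:ℕ) := by
        rw [← pow_succ']; congr 1; omega
      have : ((d - (i:ℕ) : ℕ):K) = 0 := by rw [hdi]; simp
      calc x * (((i:ℕ):K) * cf i * x^((i:ℕ)-1) * y^(d-(i:ℕ)))
            + y * (((d - (i:ℕ) : ℕ):K) * cf i * x^(i:ℕ) * y^(d-(i:ℕ)-1))
          = ((i:ℕ):K) * cf i * y^(d-(i:ℕ)) * (x * x^((i:ℕ)-1)) + 0 := by rw [this]; ring
        _ = (d:K) * (cf i * x^(i:ℕ) * y^(d-(i:ℕ))) := by rw [hxx, hdi]; ring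
    · have h1 : 1 ≤ (i:ℕ) := by omega
      have h2 : (i:ℕ) < d := by omega
      have hxx : x * x^((i:ℕ)-1) = x^(i:ℕ) := by
        rw [← pow_succ']; congr 1; omega
      have hyy : y * y^(d-(i:ℕ)-1) = y^(d-(i:ℕ)) := by
        rw [← pow_succ']; congr 1; omega
      have hcast : ((d - (i:ℕ) : ℕ):K) = (d:K) - ((i:ℕ):K) := by
        rw [Nat.cast_sub hi]
      calc x * (((i:ℕ):K) * cf i * x^((i:ℕ)-1) * y^(d-(i:ℕ)))
            + y * (((d - (i:ℕ) : ℕ):K) * cf i * x^(i:ℕ) * y^(d-(i:ℕ)-1))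
          = ((i:ℕ):K) * cf i * y^(d-(i:ℕ)) * (x * x^((i:ℕ)-1))
            + ((d - (i:ℕ) : ℕ):K) * cf i * x^(i:ℕ) * (y * y^(d-(i:ℕ)-1)) := by ring
        _ = ((i:ℕ):K) * cf i * y^(d-(i:ℕ)) * x^(i:ℕ)
            + ((d:K) - ((i:ℕ):K)) * cf i * x^(i:ℕ) * y^(d-(i:ℕ)) := by rw [hxx, hyy, hcast]
        _ = (d:K) * (cf i * x^(i:ℕ) * y^(d-(i:ℕ))) := by ring

end OneVar
/-! ### Core disk dynamics -/

section Core

variable {K : Type*} [Field K] {pl : Place K}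

/-- The residue disk around `x` (integral points reducing to `x`). -/
def Disk (pl : Place K) (x z : K) : Prop := Iv pl z ∧ Mm pl (z - x)

lemma Disk_self {x : K} (hx : Iv pl x) : Disk pl x x := ⟨hx, by rw [sub_self]; exact Mm_zero⟩

/-- `f` maps the disk to itself, with incremental ratios congruent to `Λ`. -/
def EStruct (pl : Place K) (x : K) (f : K → K) (Λ : K) : Prop :=
  (∀ z, Disk pl x z → Disk pl x (f z)) ∧
  ∀ z w, Disk pl x z → Disk pl x w →
    ∃ e, f z - f w = (z - w) * e ∧ Iv pl e ∧ Mm pl (e - Λ)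

lemma EStruct.iterate {x : K} {f : K → K} {Λ : K} (hΛ : Iv pl Λ)
    (h : EStruct pl x f Λ) (j : ℕ) : EStruct pl x (f^[j]) (Λ^j) := by
  induction j with
  | zero =>
    refine ⟨fun z hz => by simpa using hz, fun z w hz hw => ⟨1, by simp, Iv_one, ?_⟩⟩
    simpa using Mm_zero
  | succ n ih =>
    obtain ⟨ihD, ihE⟩ := ih
    refine ⟨fun z hz => ?_, fun z w hz hw => ?_⟩
    · rw [Function.iterate_succ_apply]
      exact ihD _ (h.1 z hz)
    · obtain ⟨e0, he0, he0I, he0c⟩ := h.2 z w hz hw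
      obtain ⟨e1, he1, he1I, he1c⟩ := ihE (f z) (f w) (h.1 z hz) (h.1 w hw)
      refine ⟨e0 * e1, ?_, Iv_mul he0I he1I, ?_⟩
      · rw [Function.iterate_succ_apply, Function.iterate_succ_apply, he1, he0]; ring
      · rw [pow_succ]
        have : e0 * e1 - Λ^n * Λ = e0 * (e1 - Λ^n) + Λ^n * (e0 - Λ) := by ring
        rw [this]
        exact Mm_add (Mm_mul_left he0I he1c) (Mm_mul_left (Iv_pow hΛ n) he0c)

lemma EStruct.orbit {x : K} {f : K → K} {Λ : K}
    (h : EStruct pl x f Λ) (hx : Iv pl x) (j : ℕ) : Disk pl x (f^[j] x) := by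
  induction j with
  | zero => simpa using Disk_self hx
  | succ n ih => rw [Function.iterate_succ_apply']; exact h.1 _ ih

/-- An `EStruct` has some integral `e`, hence `Λ` is integral whenever needed. -/
lemma EStruct.lambda_Iv {x : K} {f : K → K} {Λ : K}
    (h : EStruct pl x f Λ) (hx : Iv pl x) : Iv pl Λ := by
  obtain ⟨e, _, heI, hec⟩ := h.2 x x (Disk_self hx) (Disk_self hx)
  have : Λ = e - (e - Λ) := by ring
  rw [this]
  exact Iv_sub heI hec.Iv

lemma EStruct.sum_formula {x : K} {f : K → K} {Λ : K}
    (h : EStruct pl x f Λ) (hx : Iv pl x) (hΛ : Iv pl Λ) (j : ℕ) :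
    ∃ S : K, f^[j] x - x = (f x - x) * S ∧ Iv pl S ∧
      Mm pl (S - ∑ i ∈ Finset.range j, Λ^i) := by
  induction j with
  | zero => exact ⟨0, by simp, Iv_zero, by simpa using Mm_zero⟩
  | succ n ih =>
    obtain ⟨S, hS, hSI, hSc⟩ := ih
    -- the consecutive difference
    have hdiff : ∃ u, f^[n+1] x - f^[n] x = (f x - x) * u ∧ Iv pl u ∧ Mm pl (u - Λ^n) := by
      clear hS hSc
      induction n with
      | zero => exact ⟨1, by simp, Iv_one, by simpa using Mm_zero⟩
      | succ m ihm =>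
        obtain ⟨u, hu, huI, huc⟩ := ihm
        obtain ⟨e, he, heI, hec⟩ := h.2 (f^[m+1] x) (f^[m] x) (h.orbit hx _) (h.orbit hx _)
        refine ⟨u * e, ?_, Iv_mul huI heI, ?_⟩
        · have h2 : f^[m+1+1] x = f (f^[m+1] x) := Function.iterate_succ_apply' f (m+1) x
          have h3 : f^[m+1] x = f (f^[m] x) := Function.iterate_succ_apply' f m x
          linear_combination h2 + he + e * hu - h3
        · rw [pow_succ]
          have : u * e - Λ^m * Λ = u * (e - Λ) + Λ * (u - Λ^m) := by ring
          rw [this]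
          exact Mm_add (Mm_mul_left huI hec) (Mm_mul_left hΛ huc)
    obtain ⟨u, hu, huI, huc⟩ := hdiff
    refine ⟨S + u, ?_, Iv_add hSI huI, ?_⟩
    · have : f^[n+1] x - x = (f^[n+1] x - f^[n] x) + (f^[n] x - x) := by ring
      rw [this, hu, hS]; ring
    · rw [Finset.sum_range_succ]
      have : S + u - (∑ i ∈ Finset.range n, Λ^i + Λ^n) =
          (S - ∑ i ∈ Finset.range n, Λ^i) + (u - Λ^n) := by ring
      rw [this]
      exact Mm_add hSc huc

lemma key_sum {x : K} {f : K → K} {Λ : K} (h : EStruct pl x f Λ) (hx : Iv pl x)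
    (hΛ : Iv pl Λ) {k : ℕ} (hk : k = Function.minimalPeriod f x) (hk2 : 2 ≤ k) :
    Mm pl (∑ i ∈ Finset.range k, Λ^i) := by
  have hper : f^[k] x = x := by
    rw [hk]; exact Function.isPeriodicPt_minimalPeriod f x
  have hne : f x ≠ x := by
    intro hfx
    have h1 : Function.IsPeriodicPt f 1 x := by
      simpa [Function.IsPeriodicPt, Function.IsFixedPt] using hfx
    have hle := Nat.le_of_dvd one_pos h1.minimalPeriod_dvd
    omega
  obtain ⟨S, hS, hSI, hSc⟩ := h.sum_formula hx hΛ k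
  rw [hper, sub_self] at hS
  have hS0 : S = 0 := by
    rcases mul_eq_zero.1 hS.symm with h0 | h0
    · exact absurd (sub_eq_zero.1 h0) hne
    · exact h0
  rw [hS0] at hSc
  have := Mm_neg hSc
  simpa using this

lemma residue_char_dvd {p : ℕ} (hp : p.Prime) (hpm : Mm pl ((p:K))) {k : ℕ}
    (hk : Mm pl ((k:K))) (hk0 : 0 < k) : p ∣ k := by
  by_contra hnd
  have hco : Nat.Coprime p k := (Nat.Prime.coprime_iff_not_dvd hp).2 hnd
  have hbez := Nat.gcd_eq_gcd_ab p k
  rw [Nat.Coprime.gcd_eq_one hco] at hbez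
  have : (1 : K) = (p:K) * ((Nat.gcdA p k : ℤ) : K) + (k:K) * ((Nat.gcdB p k : ℤ) : K) := by
    have h3 := congrArg (fun z : ℤ => (z : K)) hbez
    push_cast at h3 ⊢
    exact h3
  have hM : Mm pl (1 : K) := by
    rw [this]
    exact Mm_add (Mm_mul_right hpm (Iv_intCast _)) (Mm_mul_right hk (Iv_intCast _))
  exact not_Mm_one hM

/-- Unipotent case: the period in a residue disk is a power of `p`. -/
lemma unip {p : ℕ} (hp : p.Prime) (hpm : Mm pl ((p:K))) {x : K} (hx : Iv pl x) :
    ∀ k : ℕ, ∀ (f : K → K) (Λ : K), Iv pl Λ → EStruct pl x f Λ → Mm pl (Λ - 1) →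
      k = Function.minimalPeriod f x → 0 < k → ∃ e : ℕ, k = p ^ e := by
  intro k
  induction k using Nat.strong_induction_on with
  | _ k ih =>
    intro f Λ hΛ hE hΛ1 hk hk0
    by_cases hk1 : k = 1
    · exact ⟨0, by simpa using hk1⟩
    have hk2 : 2 ≤ k := by omega
    have hsum := key_sum hE hx hΛ hk hk2
    have hkM : Mm pl ((k:K)) := by
      have hsub : Mm pl (∑ i ∈ Finset.range k, Λ^i - (k:K)) := by
        have hcast : ((k:ℕ):K) = ∑ i ∈ Finset.range k, (1:K) := by
          rw [Finset.sum_const, Finset.card_range, nsmul_eq_mul, mul_one]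
        rw [hcast]
        exact Mm_sum_sub_sum _ _ _ fun i _ => Mm_pow_sub_one hΛ hΛ1 i
      have : (k:K) = ∑ i ∈ Finset.range k, Λ^i - (∑ i ∈ Finset.range k, Λ^i - (k:K)) := by
        ring
      rw [this]
      exact Mm_sub hsum hsub
    have hpk : p ∣ k := residue_char_dvd hp hpm hkM hk0
    have hp0 : p ≠ 0 := hp.ne_zero
    have hk2' : k / p < k := Nat.div_lt_self hk0 hp.one_lt
    have hmin : k / p = Function.minimalPeriod (f^[p]) x := by
      rw [Function.minimalPeriod_iterate_eq_div_gcd hp0, ← hk]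
      congr 1
      exact (Nat.gcd_eq_right hpk).symm
    have hk20 : 0 < k / p := Nat.div_pos (Nat.le_of_dvd hk0 hpk) hp.pos
    obtain ⟨e2, he2⟩ := ih (k / p) hk2' (f^[p]) (Λ^p) (Iv_pow hΛ p) (hE.iterate hΛ p)
      (Mm_pow_sub_one hΛ hΛ1 p) hmin hk20
    refine ⟨e2 + 1, ?_⟩
    have : k = p * (k / p) := (Nat.mul_div_cancel' hpk).symm
    rw [this, he2, pow_succ]
    ring

/-- Core theorem: periods in a residue disk. -/
lemma core {p : ℕ} (hp : p.Prime) (hpm : Mm pl ((p:K))) {x : K} (hx : Iv pl x)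
    {f : K → K} {Λ : K} (hE : EStruct pl x f Λ)
    {k : ℕ} (hk : k = Function.minimalPeriod f x) (hk0 : 0 < k) :
    k = 1 ∨ ∃ r : ℕ, 0 < r ∧ Mm pl (Λ^r - 1) ∧
      (∀ r', 0 < r' → r' < r → ¬ Mm pl (Λ^r' - 1)) ∧
      (k = r ∨ ∃ e : ℕ, 1 ≤ e ∧ k = p ^ e * r) := by
  classical
  have hΛ : Iv pl Λ := hE.lambda_Iv hx
  by_cases hk1 : k = 1
  · exact Or.inl hk1
  right
  have hk2 : 2 ≤ k := by omega
  have hsum := key_sum hE hx hΛ hk hk2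
  -- Λ is a unit
  have hΛu : ¬ Mm pl Λ := by
    intro hM
    have hsub : Mm pl (∑ i ∈ Finset.range k, Λ^i - 1) := by
      obtain ⟨k', rfl⟩ : ∃ k', k = k' + 1 := ⟨k - 1, by omega⟩
      rw [Finset.sum_range_succ']
      simp only [pow_zero, pow_succ]
      have : ∑ i ∈ Finset.range k', Λ ^ i * Λ + 1 - 1 = ∑ i ∈ Finset.range k', Λ ^ i * Λ := by
        ring
      rw [this]
      exact Mm_sum _ _ fun i _ => Mm_mul_left (Iv_pow hΛ _) hM
    have : (1:K) = ∑ i ∈ Finset.range k, Λ^i - (∑ i ∈ Finset.range k, Λ^i - 1) := by ring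
    exact not_Mm_one (by rw [this]; exact Mm_sub hsum hsub)
  have hΛk : Mm pl (Λ^k - 1) := by
    have := geom_sum_mul Λ k
    rw [← this]
    exact Mm_mul_right hsum (Iv_sub hΛ Iv_one)
  have hex : ∃ j : ℕ, 0 < j ∧ Mm pl (Λ^j - 1) := ⟨k, hk0, hΛk⟩
  set r := Nat.find hex with hr
  obtain ⟨hr0, hrM⟩ := Nat.find_spec hex
  have hrmin : ∀ r', 0 < r' → r' < r → ¬ Mm pl (Λ^r' - 1) := by
    intro r' h1 h2 hM
    exact Nat.find_min hex h2 ⟨h1, hM⟩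
  -- r divides k
  have hrdvd : r ∣ k := by
    obtain ⟨q, s, hks, hsr⟩ : ∃ q s, k = r * q + s ∧ s < r :=
      ⟨k / r, k % r, (Nat.div_add_mod k r).symm, Nat.mod_lt _ hr0⟩
    have hdecomp : Λ^k - 1 = Λ^s * ((Λ^r)^q - 1) + (Λ^s - 1) := by
      rw [hks, pow_add, pow_mul]
      ring
    have hMq : Mm pl ((Λ^r)^q - 1) := Mm_pow_sub_one (Iv_pow hΛ r) hrM _
    have hMs : Mm pl (Λ^s - 1) := by
      have : Λ^s - 1 = (Λ^k - 1) - Λ^s * ((Λ^r)^q - 1) := by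
        rw [hdecomp]; ring
      rw [this]
      exact Mm_sub hΛk (Mm_mul_left (Iv_pow hΛ _) hMq)
    rcases Nat.eq_zero_or_pos s with hs0 | hs0
    · exact ⟨q, by omega⟩
    · exact absurd hMs (hrmin _ hs0 hsr)
  refine ⟨r, hr0, hrM, hrmin, ?_⟩
  -- the quotient is a power of p
  have hmin : k / r = Function.minimalPeriod (f^[r]) x := by
    rw [Function.minimalPeriod_iterate_eq_div_gcd hr0.ne', ← hk]
    congr 1
    exact (Nat.gcd_eq_right hrdvd).symm
  have hk20 : 0 < k / r := Nat.div_pos (Nat.le_of_dvd hk0 hrdvd) hr0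
  obtain ⟨e, he⟩ := unip hp hpm hx (k / r) (f^[r]) (Λ^r) (Iv_pow hΛ r)
    (hE.iterate hΛ r) hrM hmin hk20
  rcases Nat.eq_zero_or_pos e with he0 | he1
  · left
    have : k = r * (k / r) := (Nat.mul_div_cancel' hrdvd).symm
    rw [this, he, he0, pow_zero, mul_one]
  · right
    refine ⟨e, he1, ?_⟩
    have : k = r * (k / r) := (Nat.mul_div_cancel' hrdvd).symm
    rw [this, he]
    ring

end Core
/-! ### The chart at a point with unit second coordinate -/

section Chart

variable {K : Type*} [Field K] {pl : Place K}

lemma Mm_sub_rev {a b : K} (h : Mm pl (a - b)) : Mm pl (b - a) := by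
  have : b - a = -(a - b) := by ring
  rw [this]; exact Mm_neg h

lemma Iv_formEvalDx {d : ℕ} {cf : Fin (d+1) → K} (h : ∀ i, Iv pl (cf i))
    {u v : K} (hu : Iv pl u) (hv : Iv pl v) : Iv pl (formEvalDx d cf u v) :=
  Iv_sum _ _ fun i _ => Iv_mul (Iv_mul (Iv_mul (Iv_natCast _) (h i)) (Iv_pow hu _)) (Iv_pow hv _)

lemma Iv_formEvalDy {d : ℕ} {cf : Fin (d+1) → K} (h : ∀ i, Iv pl (cf i))
    {u v : K} (hu : Iv pl u) (hv : Iv pl v) : Iv pl (formEvalDy d cf u v) :=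
  Iv_sum _ _ fun i _ => Iv_mul (Iv_mul (Iv_mul (Iv_natCast _) (h i)) (Iv_pow hu _)) (Iv_pow hv _)

set_option maxHeartbeats 1000000 in
lemma chart_main (pl : Place K) (p : ℕ) (hp : p.Prime) (hpm : Mm pl ((p:K)))
    (d : ℕ) (a b : Fin (d+1) → K) (hia : ∀ i, Iv pl (a i)) (hib : ∀ i, Iv pl (b i))
    (ψ : P1 K → P1 K)
    (hlift : ∀ (u v : K) (h : ¬(u = 0 ∧ v = 0)),
      ∃ h', ψ (P1.mk u v h) = P1.mk (formEval d a u v) (formEval d b u v) h')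
    (x y c : K) (hyu : Uu pl y) (hxI : Iv pl x) (hcu : Uu pl c)
    (hcx : Mm pl (formEval d a x y - c * x)) (hcy : Mm pl (formEval d b x y - c * y))
    (hxy : ¬(x = 0 ∧ y = 0))
    (k : ℕ) (hk : k = Function.minimalPeriod ψ (P1.mk x y hxy))
    (hkpos : 0 < k) :
    k = 1 ∨ ∃ r : ℕ, 0 < r ∧ Mm pl (multiplier d a b x y c ^ r - 1) ∧
      (∀ r', 0 < r' → r' < r → ¬ Mm pl (multiplier d a b x y c ^ r' - 1)) ∧
      (k = r ∨ ∃ e : ℕ, 1 ≤ e ∧ k = p ^ e * r) := by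
  classical
  set g : K → K := fun z => formEval d a z y with hg
  set h : K → K := fun z => formEval d b z y with hh
  set f : K → K := fun z => y * g z / h z with hf
  set Λ : K := multiplier d a b x y c with hΛdef
  have hyI : Iv pl y := hyu.Iv
  have hcI : Iv pl c := hcu.Iv
  -- units on the disk
  have hhx : Uu pl (h x) := Uu_of_Mm_sub (Uu_mul hcu hyu) (Iv_formEval hib hxI hyI) hcy
  have hhz : ∀ z, Disk pl x z → Uu pl (h z) := by
    intro z hz
    obtain ⟨W, hW, hWI⟩ := form_sub_factor (pl := pl) d b y z x
    have : Mm pl (h z - h x) := by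
      simp only [hh]; rw [hW]
      exact Mm_mul_right hz.2 (hWI hib hyI hz.1 hxI)
    exact Uu_of_Mm_sub hhx (Iv_formEval hib hz.1 hyI) this
  have hgI : ∀ z, Iv pl z → Iv pl (g z) := fun z hz => Iv_formEval hia hz hyI
  -- the numerator of `f z - x`
  have hNx : Mm pl (y * g x - x * h x) := by
    have : y * g x - x * h x = y * (g x - c * x) - x * (h x - c * y) := by ring
    rw [this]
    exact Mm_sub (Mm_mul_left hyI hcx) (Mm_mul_left hxI hcy)
  have hNz : ∀ z, Disk pl x z → Mm pl (y * g z - x * h z) := by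
    intro z hz
    obtain ⟨Wa, hWa, hWaI⟩ := form_sub_factor (pl := pl) d a y z x
    obtain ⟨Wb, hWb, hWbI⟩ := form_sub_factor (pl := pl) d b y z x
    have key : y * g z - x * h z = (z - x) * (y * Wa - x * Wb) + (y * g x - x * h x) := by
      have e1 : g z = g x + (z - x) * Wa := by simp only [hg]; linear_combination hWa
      have e2 : h z = h x + (z - x) * Wb := by simp only [hh]; linear_combination hWb
      rw [e1, e2]; ring
    rw [key]
    exact Mm_add (Mm_mul_right hz.2 (Iv_sub (Iv_mul hyI (hWaI hia hyI hz.1 hxI))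
      (Iv_mul hxI (hWbI hib hyI hz.1 hxI)))) hNx
  -- disk preservation
  have hDmap : ∀ z, Disk pl x z → Disk pl x (f z) := by
    intro z hz
    have hzu := hhz z hz
    have heq : f z - x = (y * g z - x * h z) / h z := by
      simp only [hf]
      field_simp [hzu.1]
    have hM : Mm pl (f z - x) := by
      rw [heq]; exact Mm_div_unit (hNz z hz) hzu
    exact ⟨by have : f z = (f z - x) + x := by ring
              rw [this]; exact Iv_add hM.Iv hxI, hM⟩
  -- the element `π` of valuation 1 and the auxiliary point x' = x + π
  obtain ⟨π, hπ0, hπ1⟩ := pl.v_surj 1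
  have hπM : Mm pl π := Or.inr (by omega)
  have hπI : Iv pl π := hπM.Iv
  set x' : K := x + π with hx'
  have hx'I : Iv pl x' := Iv_add hxI hπI
  have hx'D : Disk pl x x' := ⟨hx'I, by rw [hx', add_sub_cancel_left]; exact hπM⟩
  -- abbreviations
  set Dga : K := formEvalDx d a x y with hDga
  set Dhb : K := formEvalDx d b x y with hDhb
  set Gy : K := formEvalDy d b x y with hGy
  have hDgaI : Iv pl Dga := Iv_formEvalDx hia hxI hyI
  have hDhbI : Iv pl Dhb := Iv_formEvalDx hib hxI hyI
  have hGyI : Iv pl Gy := Iv_formEvalDy hib hxI hyI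
  have hhxI : Iv pl (h x) := Iv_formEval hib hxI hyI
  have hgxI : Iv pl (g x) := hgI x hxI
  obtain ⟨Ra, hRa, hRaI⟩ := form_taylor (pl := pl) a hia hxI hyI hπI
  obtain ⟨Rb, hRb, hRbI⟩ := form_taylor (pl := pl) b hib hxI hyI hπI
  set QQ' : K := QQc d a b y x' x with hQQ'def
  have hπne : π ≠ 0 := hπ0
  have hQQeq : QQ' = Dga * h x - g x * Dhb + π * (Ra * h x - g x * Rb) := by
    apply mul_left_cancel₀ hπne
    have hspec := QQc_spec d a b y x' x
    have hxx : x' - x = π := by rw [hx']; ring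
    rw [hxx] at hspec
    rw [hQQ'def, ← hspec]
    simp only [hg, hh]
    rw [show x' = x + π from hx', hRa, hRb, hDga, hDhb]
    ring
  have hQQ'I : Iv pl QQ' := QQc_Iv hia hib hyI hx'I hxI
  have hhx' : Uu pl (h x') := hhz x' hx'D
  -- E-structure
  have hE : EStruct pl x f Λ := by
    refine ⟨hDmap, fun z w hz hw => ?_⟩
    have hzu := hhz z hz
    have hwu := hhz w hw
    refine ⟨y * QQc d a b y z w / (h z * h w), ?_, ?_, ?_⟩
    · have hspec := QQc_spec d a b y z w
      simp only [hf, hg, hh]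
      field_simp [show formEval d b z y ≠ 0 from hzu.1, show formEval d b w y ≠ 0 from hwu.1]
      linear_combination y * hspec
    · exact Iv_div_unit (Iv_mul hyI (QQc_Iv hia hib hyI hz.1 hw.1)) (Uu_mul hzu hwu)
    · -- congruence to the multiplier
      set E1 : K := y * QQc d a b y z w / (h z * h w) with hE1
      set E2 : K := y * QQ' / (h x' * h x) with hE2
      have hstep1 : Mm pl (E1 - E2) := by
        have hQc : Mm pl (QQc d a b y z w - QQc d a b y x' x) := by
          refine QQc_cong hia hib hyI hz.1 hw.1 hx'I hxI ?_ ?_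
          · have : z - x' = (z - x) - π := by rw [hx']; ring
            rw [this]; exact Mm_sub hz.2 hπM
          · exact hw.2
        have hhzx' : Mm pl (h z - h x') := by
          obtain ⟨W, hW, hWI⟩ := form_sub_factor (pl := pl) d b y z x'
          simp only [hh]; rw [hW]
          refine Mm_mul_right ?_ (hWI hib hyI hz.1 hx'I)
          have : z - x' = (z - x) - π := by rw [hx']; ring
          rw [this]; exact Mm_sub hz.2 hπM
        have hhwx : Mm pl (h w - h x) := by
          obtain ⟨W, hW, hWI⟩ := form_sub_factor (pl := pl) d b y w x
          simp only [hh]; rw [hW]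
          exact Mm_mul_right hw.2 (hWI hib hyI hw.1 hxI)
        have heq : E1 - E2 = y * (QQc d a b y z w * (h x' * h x) -
            QQ' * (h z * h w)) / ((h z * h w) * (h x' * h x)) := by
          rw [hE1, hE2, hQQ'def]
          field_simp [(hhz z hz).1, (hhz w hw).1, hhx'.1, hhx.1]
        rw [heq]
        refine Mm_div_unit (Mm_mul_left hyI ?_) (Uu_mul (Uu_mul (hhz z hz) (hhz w hw))
          (Uu_mul hhx' hhx))
        have hsplit : QQc d a b y z w * (h x' * h x) - QQ' * (h z * h w) =
            (QQc d a b y z w - QQ') * (h x' * h x) + QQ' * ((h x' - h z) * h x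
              + h z * (h x - h w)) := by ring
        rw [hsplit]
        refine Mm_add (Mm_mul_right hQc (Iv_mul (Iv_formEval hib hx'I hyI) hhxI))
          (Mm_mul_left hQQ'I (Mm_add (Mm_mul_right (Mm_sub_rev hhzx') hhxI)
            (Mm_mul_left (Iv_formEval hib hz.1 hyI) (Mm_sub_rev hhwx))))
      have hstep2 : Mm pl (E2 - Λ) := by
        set T : K := Ra * h x - g x * Rb with hT
        set T2 : K := Dhb + π * Rb with hT2
        have hTI : Iv pl T := Iv_sub (Iv_mul hRaI hhxI) (Iv_mul hgxI hRbI)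
        have hT2I : Iv pl T2 := Iv_add hDhbI (Iv_mul hπI hRbI)
        have hhx'eq : h x' = h x + π * T2 := by
          simp only [hh]
          rw [show x' = x + π from hx', hRb, hT2, hDhb]
          ring
        set NUM : K := c * y * QQ' - (Dga + Gy - (d:K) * c) * (h x' * h x) with hNUM
        have heuler := euler_form d b x y
        have heq : E2 - Λ = NUM / (c * (h x' * h x)) := by
          rw [hE2, hNUM, hΛdef]
          unfold multiplier
          rw [← hDga, ← hGy]
          field_simp [hcu.1, hhx'.1, hhx.1]
        have hNUMdecomp : NUM = (-(c * y * Dhb)) * (g x - c * x) +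
            ((-(d:K) * c^2 * y) + c * y * Dga - (Dga + Gy - (d:K) * c) * (2 * c * y + (h x - c * y))
              - (Dga + Gy - (d:K) * c) * π * T2) * (h x - c * y) +
            π * (c * y * T - (Dga + Gy - (d:K) * c) * T2 * (c * y)) +
            (-(c^2 * y)) * (x * Dhb + y * Gy - (d:K) * h x) := by
          rw [hNUM, hQQeq, hhx'eq]
          ring
        have heu0 : x * Dhb + y * Gy - (d:K) * h x = 0 := by
          simp only [hDhb, hGy, hh]
          linear_combination heuler
        rw [heq]
        refine Mm_div_unit ?_ (Uu_mul hcu (Uu_mul hhx' hhx))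
        rw [hNUMdecomp, heu0, mul_zero, add_zero]
        have h2I : Iv pl (2:K) := by
          rw [show (2:K) = 1 + 1 by norm_num]; exact Iv_add Iv_one Iv_one
        refine Mm_add (Mm_add (Mm_mul_left ?_ hcx) (Mm_mul_left ?_ hcy))
          (Mm_mul_right hπM ?_)
        all_goals
          repeat'
            first
            | exact hDgaI | exact hDhbI | exact hGyI | exact hhxI | exact hgxI
            | exact hcI | exact hyI | exact hxI | exact hπI | exact hTI | exact hT2I
            | apply Iv_add | apply Iv_sub | apply Iv_mul | apply Iv_neg | apply Iv_pow
            | exact Iv_one | exact h2I | exact (Iv_natCast _)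
      have : E1 - Λ = (E1 - E2) + (E2 - Λ) := by ring
      rw [this]
      exact Mm_add hstep1 hstep2
  -- conjugacy with ψ on the disk
  have hy0 : y ≠ 0 := hyu.1
  have hmkne : ∀ z : K, ¬(z = 0 ∧ y = 0) := fun z hc => hy0 hc.2
  have hpt : ∀ z, Disk pl x z → ψ (P1.mk z y (hmkne z)) = P1.mk (f z) y (hmkne (f z)) := by
    intro z hz
    obtain ⟨h', hψ⟩ := hlift z y (hmkne z)
    rw [hψ]
    rw [P1.mk_eq_mk_iff_det]
    have hzu := hhz z hz
    have hz0 : formEval d b z y ≠ 0 := hzu.1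
    simp only [hf, hg, hh]
    field_simp [hz0]
    ring
  have horb : ∀ j : ℕ, Disk pl x (f^[j] x) := hE.orbit hxI
  have hconj : ∀ j : ℕ, ψ^[j] (P1.mk x y hxy) = P1.mk (f^[j] x) y (hmkne _) := by
    intro j
    induction j with
    | zero =>
      simp only [Function.iterate_zero_apply]
    | succ n ih =>
      rw [Function.iterate_succ_apply', ih, Function.iterate_succ_apply']
      exact hpt _ (horb n)
  have hmkinj : ∀ z z' : K, P1.mk z y (hmkne z) = P1.mk z' y (hmkne z') → z = z' := by
    intro z z' hzz
    rw [P1.mk_eq_mk_iff_det] at hzz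
    have : (z - z') * y = 0 := by linear_combination hzz
    rcases mul_eq_zero.1 this with h0 | h0
    · exact sub_eq_zero.1 h0
    · exact absurd h0 hy0
  have hperiod : k = Function.minimalPeriod f x := by
    have htrans : ∀ j : ℕ, Function.IsPeriodicPt ψ j (P1.mk x y hxy) ↔
        Function.IsPeriodicPt f j x := by
      intro j
      constructor
      · intro hj
        have h3 : P1.mk (f^[j] x) y (hmkne _) = P1.mk x y (hmkne x) := by
          rw [← hconj j]; exact hj
        exact hmkinj _ _ h3
      · intro hj
        show ψ^[j] _ = _
        rw [hconj j]
        have h4 : f^[j] x = x := hj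
        rw [h4]
    have h1 : Function.IsPeriodicPt f k x := by
      rw [← htrans]
      rw [hk]
      exact Function.isPeriodicPt_minimalPeriod ψ _
    have h2 : Function.IsPeriodicPt ψ (Function.minimalPeriod f x) (P1.mk x y hxy) := by
      rw [htrans]
      exact Function.isPeriodicPt_minimalPeriod f x
    have hd1 : Function.minimalPeriod f x ∣ k := h1.minimalPeriod_dvd
    have hd2 : k ∣ Function.minimalPeriod f x := by rw [hk]; exact h2.minimalPeriod_dvd
    exact Nat.dvd_antisymm hd2 hd1
  exact core hp hpm hxI hE hperiod hkpos

end Chart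
/-! ### Global reduction machinery -/

section Global

variable {K : Type*} [Field K] {pl : Place K}

lemma sd_symm {P Q : P1 K} (h : 0 < logDist pl P Q) : 0 < logDist pl Q P := by
  obtain ⟨u, v, hn, hP, hg⟩ := exists_goodCoords pl P
  obtain ⟨u', v', hn', hQ, hg'⟩ := exists_goodCoords pl Q
  rw [hP, hQ] at h ⊢
  rw [logDist_pos_iff hg hg'] at h
  rw [logDist_pos_iff hg' hg]
  have : u' * v - u * v' = -(u * v' - u' * v) := by ring
  rw [this]
  exact Mm_neg h

lemma sd_trans {P Q R : P1 K} (h1 : 0 < logDist pl P Q) (h2 : 0 < logDist pl Q R) :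
    0 < logDist pl P R := by
  obtain ⟨u, v, hn, hP, hg⟩ := exists_goodCoords pl P
  obtain ⟨u', v', hn', hQ, hg'⟩ := exists_goodCoords pl Q
  obtain ⟨u'', v'', hn'', hR, hg''⟩ := exists_goodCoords pl R
  rw [hP, hQ] at h1
  rw [hQ, hR] at h2
  rw [hP, hR]
  rw [logDist_pos_iff hg hg'] at h1
  rw [logDist_pos_iff hg' hg''] at h2
  rw [logDist_pos_iff hg hg'']
  rcases hg'.2.2 with hU | hU
  · have key : u' * (u * v'' - u'' * v) = u * (u' * v'' - u'' * v') + u'' * (u * v' - u' * v) := by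
      ring
    refine Mm_of_unit_mul hU ?_
    rw [key]
    exact Mm_add (Mm_mul_left hg.1 h2) (Mm_mul_left hg''.1 h1)
  · have key : v' * (u * v'' - u'' * v) = v * (u' * v'' - u'' * v') + v'' * (u * v' - u' * v) := by
      ring
    refine Mm_of_unit_mul hU ?_
    rw [key]
    exact Mm_add (Mm_mul_left hg.2.1 h2) (Mm_mul_left hg''.2.1 h1)

/-- Non-expansion: a map with good reduction preserves the same-disk relation. -/
lemma sd_map {χ : P1 K → P1 K} {d' : ℕ} (hd' : 1 ≤ d') {a' b' : Fin (d'+1) → K}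
    (hlift : IsLift χ d' a' b') (hia : ∀ i, Iv pl (a' i)) (hib : ∀ i, Iv pl (b' i))
    (hres : pl.v (resultant d' a' b') = 0) {P Q : P1 K}
    (h : 0 < logDist pl P Q) : 0 < logDist pl (χ P) (χ Q) := by
  obtain ⟨u, v, hn, hP, hg⟩ := exists_goodCoords pl P
  obtain ⟨u', v', hn', hQ, hg'⟩ := exists_goodCoords pl Q
  rw [hP, hQ] at h ⊢
  rw [logDist_pos_iff hg hg'] at h
  obtain ⟨h1, hχP⟩ := hlift.2 u v hn
  obtain ⟨h2, hχQ⟩ := hlift.2 u' v' hn'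
  rw [hχP, hχQ]
  have hgim := formEval_goodCoords hd' hia hib hlift.1 hres hg
  have hgim' := formEval_goodCoords hd' hia hib hlift.1 hres hg'
  rw [logDist_pos_iff hgim hgim']
  obtain ⟨H, hH, hHI⟩ := cross_diff_factor a' b' hia hib u v u' v' hg.1 hg.2.1 hg'.1 hg'.2.1
  rw [hH]
  exact Mm_mul_right h hHI

/-- The coordinate swap on the projective line. -/
noncomputable def swapP (Q : P1 K) : P1 K :=
  P1.mk (Q.rep 1) (Q.rep 0) (fun hc => Q.rep_nonzero
    (by rw [← vec_eta Q.rep, hc.1, hc.2]; ext i; fin_cases i <;> simp))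

lemma swapP_mk {u v : K} (h : ¬(u = 0 ∧ v = 0)) (h' : ¬(v = 0 ∧ u = 0)) :
    swapP (P1.mk u v h) = P1.mk v u h' := by
  obtain ⟨t, ht, h0, h1⟩ := P1.rep_mk h
  unfold swapP
  rw [P1.mk_eq_mk_iff_det, h0, h1]
  ring

lemma swapP_swapP (Q : P1 K) : swapP (swapP Q) = Q := by
  have h1 := P1.point_eq_mk Q
  have hne : ¬(Q.rep 1 = 0 ∧ Q.rep 0 = 0) := fun hc => Q.rep_nonzero
    (by rw [← vec_eta Q.rep, hc.1, hc.2]; ext i; fin_cases i <;> simp)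
  have hne' : ¬(Q.rep 0 = 0 ∧ Q.rep 1 = 0) := fun hc => hne ⟨hc.2, hc.1⟩
  calc swapP (swapP Q) = swapP (P1.mk (Q.rep 1) (Q.rep 0) hne) := rfl
    _ = P1.mk (Q.rep 0) (Q.rep 1) hne' := swapP_mk hne hne'
    _ = Q := (P1.point_eq_mk Q).symm

lemma swap_conj_iterate (χ : P1 K → P1 K) (j : ℕ) (Q : P1 K) :
    (fun R => swapP (χ (swapP R)))^[j] Q = swapP (χ^[j] (swapP Q)) := by
  induction j with
  | zero => simp [swapP_swapP]
  | succ n ih =>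
    rw [Function.iterate_succ_apply', ih, Function.iterate_succ_apply', swapP_swapP]

lemma swap_conj_minimalPeriod (χ : P1 K → P1 K) (Q : P1 K) :
    Function.minimalPeriod (fun R => swapP (χ (swapP R))) (swapP Q) =
      Function.minimalPeriod χ Q := by
  have htrans : ∀ j : ℕ, Function.IsPeriodicPt (fun R => swapP (χ (swapP R))) j (swapP Q) ↔
      Function.IsPeriodicPt χ j Q := by
    intro j
    unfold Function.IsPeriodicPt Function.IsFixedPt
    rw [swap_conj_iterate, swapP_swapP]
    constructor
    · intro h
      have := congrArg swapP h
      rwa [swapP_swapP, swapP_swapP] at this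
    · intro h
      rw [h]
  have h1 : Function.IsPeriodicPt χ
      (Function.minimalPeriod (fun R => swapP (χ (swapP R))) (swapP Q)) Q := by
    rw [← htrans]
    exact Function.isPeriodicPt_minimalPeriod _ _
  have h2 : Function.IsPeriodicPt (fun R => swapP (χ (swapP R)))
      (Function.minimalPeriod χ Q) (swapP Q) := by
    rw [htrans]
    exact Function.isPeriodicPt_minimalPeriod _ _
  exact Nat.dvd_antisymm h2.minimalPeriod_dvd h1.minimalPeriod_dvd

/-- Reversal of a coefficient vector. -/
def revc (d : ℕ) (cf : Fin (d+1) → K) : Fin (d+1) → K := fun i => cf i.rev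

lemma formEval_rev (d : ℕ) (cf : Fin (d+1) → K) (u v : K) :
    formEval d (revc d cf) u v = formEval d cf v u := by
  unfold formEval revc
  refine Fintype.sum_equiv (Fin.revPerm) _ _ fun i => ?_
  have hi : (i:ℕ) ≤ d := by omega
  have hval : ((Fin.revPerm i : Fin (d+1)) : ℕ) = d - (i : ℕ) := by
    simp [Fin.revPerm, Fin.rev]
  have hpr : Fin.revPerm i = i.rev := rfl
  rw [hval, hpr, show d - (d - (i:ℕ)) = (i:ℕ) by omega]
  ring

lemma formEvalDx_rev_a (d : ℕ) (cf : Fin (d+1) → K) (u v : K) :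
    formEvalDx d (revc d cf) u v = formEvalDy d cf v u := by
  unfold formEvalDx formEvalDy revc
  refine Fintype.sum_equiv (Fin.revPerm) _ _ fun i => ?_
  have hi : (i:ℕ) ≤ d := by omega
  have hval : ((Fin.revPerm i : Fin (d+1)) : ℕ) = d - (i : ℕ) := by
    simp [Fin.revPerm, Fin.rev]
  have hpr : Fin.revPerm i = i.rev := rfl
  rw [hval, hpr, show d - (d - (i:ℕ)) = (i:ℕ) by omega]
  ring

lemma formEvalDy_rev (d : ℕ) (cf : Fin (d+1) → K) (u v : K) :
    formEvalDy d (revc d cf) u v = formEvalDx d cf v u := by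
  unfold formEvalDx formEvalDy revc
  refine Fintype.sum_equiv (Fin.revPerm) _ _ fun i => ?_
  have hi : (i:ℕ) ≤ d := by omega
  have hval : ((Fin.revPerm i : Fin (d+1)) : ℕ) = d - (i : ℕ) := by
    simp [Fin.revPerm, Fin.rev]
  have hpr : Fin.revPerm i = i.rev := rfl
  rw [hval, hpr, show d - (d - (i:ℕ)) = (i:ℕ) by omega]
  ring

lemma multiplier_rev (d : ℕ) (a b : Fin (d+1) → K) (x y c : K) :
    multiplier d (revc d b) (revc d a) y x c = multiplier d a b x y c := by
  unfold multiplier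
  rw [formEvalDx_rev_a, formEvalDy_rev]
  ring_nf

end Global
/-- Theorem of Morton–Silverman and Zieve.  Let `K` be a global field,
`𝔭` a non-archimedean place of `K` whose residue field has characteristic `p`, and `φ` an
endomorphism of `ℙ¹` of degree at least `2` defined over `K` with good reduction at `𝔭`.
Let `P ∈ ℙ¹(K)` be periodic for `φ` with minimal period `n`, let `m` be the minimal period
of the reduction of `P` modulo `𝔭` (the least `m ≥ 1` with `δ_𝔭(φ^m(P), P) > 0`, two
points having the same reduction iff `δ_𝔭 > 0`), and let `r` be the multiplicative order
of `(φ^m)'(P)` in `k(𝔭) \ {0}`.  Here `(φ^m)'(P)` modulo `𝔭` is the multiplier `Λ` of the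
reduced point computed, via the trace formula `Λ = (F_x(x,y) + G_y(x,y) - d⬝c)/c`, from an
integral lift `(F, G)` of `φ^m` with unit resultant, `𝔭`-coprime integral coordinates
`(x, y)` of `P`, and a unit scalar `c` with `F(x,y) ≡ c⬝x` and `G(x,y) ≡ c⬝y (mod 𝔭)`;
its multiplicative order `r` is the least `r ≥ 1` with `Λ^r ≡ 1 (mod 𝔭)` (`r = ∞`, i.e.
no such `r`, when `Λ ≡ 0`).  Then `n = m`, or `n = mr`, or `n = p^e·m·r` with `e ≥ 1`. -/
theorem stmt19 (K : Type) [Field K] (hK : IsGlobalField K) (pl : Place K)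
    (p : ℕ) (hp : p.Prime) (hres : (p : K) = 0 ∨ 0 < pl.v (p : K))
    (φ : P1 K → P1 K)
    (hdeg : ∃ (d₀ : ℕ) (a₀ b₀ : Fin (d₀ + 1) → K), 2 ≤ d₀ ∧ IsLift φ d₀ a₀ b₀)
    (hgood : GoodReduction pl φ)
    (P : P1 K) (hP : PeriodicPt φ P)
    (n : ℕ) (hn : n = Function.minimalPeriod φ P)
    -- `m`: the minimal period of the reduction of `P` modulo `𝔭`
    (m : ℕ) (hm0 : 0 < m) (hmfix : 0 < logDist pl (φ^[m] P) P)
    (hmmin : ∀ m', 0 < m' → m' < m → ¬ (0 < logDist pl (φ^[m'] P) P))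
    -- an integral lift of `φ^m` with unit resultant
    (d : ℕ) (a b : Fin (d + 1) → K) (hlift : IsLift (φ^[m]) d a b)
    (hia : ∀ i, 0 ≤ pl.v (a i)) (hib : ∀ i, 0 ≤ pl.v (b i))
    (hures : pl.v (resultant d a b) = 0)
    -- `𝔭`-coprime integral coordinates for `P`
    (x y : K) (hxy : ¬(x = 0 ∧ y = 0)) (hPxy : P = P1.mk x y hxy)
    (hxi : 0 ≤ pl.v x) (hyi : 0 ≤ pl.v y)
    (hcop : (x ≠ 0 ∧ pl.v x = 0) ∨ (y ≠ 0 ∧ pl.v y = 0))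
    -- a unit scalar `c` with `(F(x,y), G(x,y)) ≡ c⬝(x,y) (mod 𝔭)`
    (c : K) (hc : c ≠ 0) (hcu : pl.v c = 0)
    (hcx : formEval d a x y - c * x = 0 ∨ 0 < pl.v (formEval d a x y - c * x))
    (hcy : formEval d b x y - c * y = 0 ∨ 0 < pl.v (formEval d b x y - c * y)) :
    n = m ∨
      ∃ r : ℕ, 0 < r ∧
        (multiplier d a b x y c ^ r - 1 = 0 ∨ 0 < pl.v (multiplier d a b x y c ^ r - 1)) ∧
        (∀ r', 0 < r' → r' < r →
          ¬ (multiplier d a b x y c ^ r' - 1 = 0 ∨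
              0 < pl.v (multiplier d a b x y c ^ r' - 1))) ∧
        (n = m * r ∨ ∃ e : ℕ, 1 ≤ e ∧ n = p ^ e * m * r) := by
  classical
  obtain ⟨n0, hn0pos, hn0⟩ := hP
  have hper0 : Function.IsPeriodicPt φ n0 P := hn0
  have hnpos : 0 < n := by rw [hn]; exact hper0.minimalPeriod_pos hn0pos
  have hnper : φ^[n] P = P := by rw [hn]; exact Function.isPeriodicPt_minimalPeriod φ P
  by_cases hfix : φ^[m] P = P
  · left
    have hdvd : n ∣ m := by
      rw [hn]
      exact Function.IsPeriodicPt.minimalPeriod_dvd hfix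
    have hmle : m ≤ n := by
      by_contra hlt
      push_neg at hlt
      exact hmmin n hnpos hlt (by rw [hnper]; exact logDist_self_pos P)
    have := Nat.le_of_dvd hm0 hdvd
    omega
  have hform0 : ∀ (cf : Fin (0+1) → K) (u v : K), formEval 0 cf u v = cf 0 := by
    intro cf u v
    unfold formEval
    simp
  have hd'aux : ∀ (χ : P1 K → P1 K) (a0 b0 : Fin (0+1) → K), IsLift χ 0 a0 b0 →
      ∀ Q Q' : P1 K, χ Q = χ Q' := by
    intro χ a0 b0 hl Q Q'
    obtain ⟨u, v, hnv, hQ, _⟩ := exists_goodCoords pl Q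
    obtain ⟨u', v', hnv', hQ', _⟩ := exists_goodCoords pl Q'
    obtain ⟨hA, hB⟩ := hl.2 u v hnv
    obtain ⟨hA', hB'⟩ := hl.2 u' v' hnv'
    rw [hQ, hQ', hB, hB', P1.mk_eq_mk_iff_det, hform0, hform0, hform0, hform0]
    ring
  have hd1 : 1 ≤ d := by
    by_contra hd0
    have hd0' : d = 0 := by omega
    subst hd0'
    have hconst := hd'aux (φ^[m]) a b hlift
    apply hfix
    have hψn : (φ^[m])^[n] P = P := by
      rw [← Function.iterate_mul]
      have hmn : Function.IsPeriodicPt φ (n * m) P :=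
        (show Function.IsPeriodicPt φ n P from hnper).mul_const m
      rw [Nat.mul_comm] at hmn
      exact hmn
    have hstep : ∀ j, 1 ≤ j → (φ^[m])^[j] P = φ^[m] P := by
      intro j hj
      induction j with
      | zero => omega
      | succ t ih =>
        rcases Nat.eq_zero_or_pos t with rfl | ht
        · simp
        · rw [Function.iterate_succ_apply', ih ht]
          exact hconst _ _
    calc φ^[m] P = (φ^[m])^[n] P := (hstep n hnpos).symm
      _ = P := hψn
  obtain ⟨d', a', b', hlift', hia', hib', hres'⟩ := hgood
  have hd'1 : 1 ≤ d' := by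
    by_contra h0
    have hd0' : d' = 0 := by omega
    subst hd0'
    have hconst := hd'aux φ a' b' hlift'
    have hφP : φ P = P := by
      conv_rhs => rw [← hnper]
      obtain ⟨n', rfl⟩ : ∃ n', n = n' + 1 := ⟨n - 1, by omega⟩
      rw [Function.iterate_succ_apply']
      exact hconst P (φ^[n'] P)
    exact hfix (Function.IsFixedPt.iterate hφP m)
  have hstepm : ∀ j : ℕ, 0 < logDist pl (φ^[j + m] P) (φ^[j] P) := by
    intro j
    induction j with
    | zero => simpa using hmfix
    | succ t ih =>
      have h1 : φ^[t + 1 + m] P = φ (φ^[t + m] P) := by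
        rw [show t + 1 + m = (t + m) + 1 by omega, Function.iterate_succ_apply']
      have h2 : φ^[t + 1] P = φ (φ^[t] P) := Function.iterate_succ_apply' φ t P
      rw [h1, h2]
      exact sd_map hd'1 hlift' hia' hib' hres' ih
  have hchain : ∀ i : ℕ, 0 < logDist pl (φ^[n % m + i * m] P) (φ^[n % m] P) := by
    intro i
    induction i with
    | zero => simpa using logDist_self_pos (φ^[n % m] P)
    | succ t ih =>
      have h1 : 0 < logDist pl (φ^[(n % m + t * m) + m] P) (φ^[n % m + t * m] P) :=
        hstepm _
      have h2 : n % m + (t+1) * m = (n % m + t * m) + m := by ring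
      rw [h2]
      exact sd_trans h1 ih
  have hmdvd : m ∣ n := by
    have hkey := hchain (n / m)
    have heq : n % m + (n / m) * m = n := Nat.mod_add_div' n m
    rw [heq, hnper] at hkey
    rcases Nat.eq_zero_or_pos (n % m) with h0 | h0
    · exact Nat.dvd_of_mod_eq_zero h0
    · exfalso
      exact hmmin (n % m) h0 (Nat.mod_lt _ hm0) (sd_symm hkey)
  set k := n / m with hkdef
  have hnk : n = m * k := (Nat.mul_div_cancel' hmdvd).symm
  have hkpos : 0 < k := by
    rcases Nat.eq_zero_or_pos k with h0 | h0
    · rw [h0, mul_zero] at hnk; omega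
    · exact h0
  have hkmin : k = Function.minimalPeriod (φ^[m]) P := by
    have h1 : Function.IsPeriodicPt (φ^[m]) k P := by
      show (φ^[m])^[k] P = P
      rw [← Function.iterate_mul, ← hnk]
      exact hnper
    have h2 : Function.IsPeriodicPt φ (m * Function.minimalPeriod (φ^[m]) P) P := by
      show φ^[m * _] P = P
      rw [Function.iterate_mul]
      exact Function.isPeriodicPt_minimalPeriod (φ^[m]) P
    have hd2 : n ∣ m * Function.minimalPeriod (φ^[m]) P := by
      rw [hn]; exact h2.minimalPeriod_dvd
    have hdd1 : Function.minimalPeriod (φ^[m]) P ∣ k := h1.minimalPeriod_dvd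
    obtain ⟨t, ht⟩ := hd2
    have hk2 : k ∣ Function.minimalPeriod (φ^[m]) P := by
      refine ⟨t, ?_⟩
      have hmul : m * (k * t) = m * Function.minimalPeriod (φ^[m]) P := by
        rw [← mul_assoc, ← hnk, ht]
      exact (Nat.eq_of_mul_eq_mul_left hm0 hmul).symm
    exact Nat.dvd_antisymm hk2 hdd1
  have hpm : Mm pl ((p:K)) := hres
  have hcuu : Uu pl c := ⟨hc, hcu⟩
  have hfinish : (k = 1 ∨ ∃ r : ℕ, 0 < r ∧ Mm pl (multiplier d a b x y c ^ r - 1) ∧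
      (∀ r', 0 < r' → r' < r → ¬ Mm pl (multiplier d a b x y c ^ r' - 1)) ∧
      (k = r ∨ ∃ e : ℕ, 1 ≤ e ∧ k = p ^ e * r)) →
      (n = m ∨ ∃ r : ℕ, 0 < r ∧
        (multiplier d a b x y c ^ r - 1 = 0 ∨ 0 < pl.v (multiplier d a b x y c ^ r - 1)) ∧
        (∀ r', 0 < r' → r' < r →
          ¬ (multiplier d a b x y c ^ r' - 1 = 0 ∨
              0 < pl.v (multiplier d a b x y c ^ r' - 1))) ∧
        (n = m * r ∨ ∃ e : ℕ, 1 ≤ e ∧ n = p ^ e * m * r)) := by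
    rintro (h1 | ⟨r, hr0, hrM, hrmin, hcase⟩)
    · left; rw [hnk, h1, mul_one]
    · right
      refine ⟨r, hr0, hrM, hrmin, ?_⟩
      rcases hcase with h1 | ⟨e, he1, he⟩
      · left; rw [hnk, h1]
      · right; exact ⟨e, he1, by rw [hnk, he]; ring⟩
  rcases hcop with ⟨hx0, hvx⟩ | ⟨hy0, hvy⟩
  · -- x is a unit: use the swapped chart
    have hlifts : ∀ (u v : K) (h : ¬(u = 0 ∧ v = 0)),
        ∃ h', (fun R => swapP ((φ^[m]) (swapP R))) (P1.mk u v h) =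
          P1.mk (formEval d (revc d b) u v) (formEval d (revc d a) u v) h' := by
      intro u v h
      have hvu : ¬(v = 0 ∧ u = 0) := fun hc => h ⟨hc.2, hc.1⟩
      obtain ⟨h', hB⟩ := hlift.2 v u hvu
      have h'' : ¬(formEval d (revc d b) u v = 0 ∧ formEval d (revc d a) u v = 0) := by
        rw [formEval_rev, formEval_rev]
        exact fun hc => h' ⟨hc.2, hc.1⟩
      refine ⟨h'', ?_⟩
      show swapP ((φ^[m]) (swapP (P1.mk u v h))) = _
      rw [swapP_mk h hvu, hB,
        swapP_mk h' (fun hc => h' ⟨hc.2, hc.1⟩)]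
      rw [P1.mk_eq_mk_iff_det, formEval_rev, formEval_rev]
      ring
    have hswap : swapP P = P1.mk y x (fun hc => hx0 hc.2) := by
      rw [hPxy, swapP_mk hxy (fun hc => hxy ⟨hc.2, hc.1⟩)]
    have hkmin' : k = Function.minimalPeriod (fun R => swapP ((φ^[m]) (swapP R)))
        (P1.mk y x (fun hc => hx0 hc.2)) := by
      rw [← hswap, swap_conj_minimalPeriod (φ^[m]) P]
      exact hkmin
    have hcx' : Mm pl (formEval d (revc d b) y x - c * y) := by
      rw [formEval_rev]; exact hcy
    have hcy' : Mm pl (formEval d (revc d a) y x - c * x) := by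
      rw [formEval_rev]; exact hcx
    have hchart := chart_main pl p hp hpm d (revc d b) (revc d a)
      (fun i => hib _) (fun i => hia _) (fun R => swapP ((φ^[m]) (swapP R))) hlifts
      y x c ⟨hx0, hvx⟩ hyi hcuu hcx' hcy' (fun hc => hx0 hc.2) k hkmin' hkpos
    rw [multiplier_rev] at hchart
    exact hfinish hchart
  · -- y is a unit: direct chart
    have hkmin'' : k = Function.minimalPeriod (φ^[m]) (P1.mk x y hxy) := by
      rw [← hPxy]; exact hkmin
    have hchart := chart_main pl p hp hpm d a b hia hib (φ^[m]) hlift.2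
      x y c ⟨hy0, hvy⟩ hxi hcuu hcx hcy hxy k hkmin'' hkpos
    exact hfinish hchart

end ArxivPreper
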